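/- arXiv:1505.04222 — 5 statements merged into one kernel-verified Lean document; each statement's English description precedes it below -/
import Mathlib

section
/- Let k be a field, assume C is symmetric (simply-laced type), and let α = Σ_{i∈I} a_i α_i ∈ Q⁺ with ht(α) = n and a_{i_1} > 0. Then the element z = Σ_{w ∈ S^i} (x_{w(1)} + ⋯ + x_{w(a_{i_1})}) 1_{w·i} ∈ H_{α,k} does not depend on the choice of the coset representatives S^i, and z is a central element of H_{α,k} which is homogeneous of degree 2. -/
open scoped BigOperators

namespace KLR

/-- A Cartan datum of finite type: a finite index set `I`, a Cartan matrix `c` of finite type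
(encoded by positive definiteness of the symmetrized matrix), symmetrizers `d`, and a choice
of signs `eps` with `eps i j * eps j i = -1` whenever `c i j < 0`. -/
structure CartanDatum (I : Type) [Fintype I] [DecidableEq I] where
  c : I → I → ℤ
  d : I → ℤ
  eps : I → I → ℤ
  c_diag : ∀ i, c i i = 2
  c_offdiag : ∀ i j, i ≠ j → c i j ≤ 0
  c_zero_iff : ∀ i j, c i j = 0 → c j i = 0
  d_pos : ∀ i, 0 < d i
  symm : ∀ i j, d i * c i j = d j * c j i
  finiteType : ∀ v : I → ℚ, v ≠ 0 → 0 < ∑ i, ∑ j, v i * ((d i * c i j : ℤ) : ℚ) * v j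
  eps_sign : ∀ i j, c i j < 0 → eps i j = 1 ∨ eps i j = -1
  eps_skew : ∀ i j, c i j < 0 → eps i j * eps j i = -1

variable {I : Type} [Fintype I] [DecidableEq I]

/-- The height of `α ∈ Q⁺`, where `α : I → ℕ` records the coefficients on the simple roots. -/
def ht (α : I → ℕ) : ℕ := ∑ i, α i

/-- Membership in `I^α`: the word `f` has exactly `α i` letters equal to `i`, for each `i`. -/
def InIalpha (α : I → ℕ) {n : ℕ} (f : Fin n → I) : Prop :=
  ∀ i : I, (Finset.univ.filter fun r => f r = i).card = α i

instance (α : I → ℕ) {n : ℕ} (f : Fin n → I) : Decidable (InIalpha α f) := by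
  unfold InIalpha; infer_instance

/-- Generators of the KLR algebra: idempotents `e f`, polynomial generators `x r`,
and "intertwiners" `t r` (the generator `t r` is set to `0` unless `r + 1 < n`). -/
inductive Gen (I : Type) (n : ℕ) : Type
  | e : (Fin n → I) → Gen I n
  | x : Fin n → Gen I n
  | t : Fin n → Gen I n

variable (k : Type) [CommRing k]

/-- `e f` as an element of the free algebra. -/
def Ee {n : ℕ} (f : Fin n → I) : FreeAlgebra k (Gen I n) := FreeAlgebra.ι k (Gen.e f)

/-- `x r` as an element of the free algebra. -/
def Xx {n : ℕ} (r : Fin n) : FreeAlgebra k (Gen I n) := FreeAlgebra.ι k (Gen.x r)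

/-- `t r` as an element of the free algebra. -/
def Tt {n : ℕ} (r : Fin n) : FreeAlgebra k (Gen I n) := FreeAlgebra.ι k (Gen.t r)

/-- `r + 1` as an element of `Fin n`. -/
def nxt {n : ℕ} (r : Fin n) (h : r.val + 1 < n) : Fin n := ⟨r.val + 1, h⟩

/-- The defining relations of the KLR algebra `H_α` over `k`.
(`Rel a b` means that `a = b` is imposed in the quotient.) -/
inductive Rel (D : CartanDatum I) (α : I → ℕ) (n : ℕ) :
    FreeAlgebra k (Gen I n) → FreeAlgebra k (Gen I n) → Prop
  | xx (r s : Fin n) : Rel D α n (Xx k r * Xx k s) (Xx k s * Xx k r)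
  | ee (f g : Fin n → I) :
      Rel D α n (Ee k f * Ee k g) (if f = g then Ee k f else 0)
  | esum : Rel D α n (∑ f : Fin n → I, Ee k f) 1
  | ekill (f : Fin n → I) (h : ¬ InIalpha α f) : Rel D α n (Ee k f) 0
  | xe (r : Fin n) (f : Fin n → I) : Rel D α n (Xx k r * Ee k f) (Ee k f * Xx k r)
  | te (r : Fin n) (h : r.val + 1 < n) (f : Fin n → I) :
      Rel D α n (Tt k r * Ee k f) (Ee k (f ∘ Equiv.swap r (nxt r h)) * Tt k r)
  | tkill (r : Fin n) (h : ¬ r.val + 1 < n) : Rel D α n (Tt k r) 0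
  | xte (s r : Fin n) (h : r.val + 1 < n) (f : Fin n → I) :
      Rel D α n (Xx k s * Tt k r * Ee k f - Tt k r * Xx k (Equiv.swap r (nxt r h) s) * Ee k f)
        (if f r = f (nxt r h) then
          ((if s = nxt r h then (1 : FreeAlgebra k (Gen I n)) else 0) -
            (if s = r then 1 else 0)) * Ee k f
         else 0)
  | tte (r : Fin n) (h : r.val + 1 < n) (f : Fin n → I) :
      Rel D α n (Tt k r * Tt k r * Ee k f)
        (if f r = f (nxt r h) then 0
         else if D.c (f r) (f (nxt r h)) < 0 then
           D.eps (f r) (f (nxt r h)) •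
             ((Xx k r ^ (-(D.c (f r) (f (nxt r h)))).toNat -
               Xx k (nxt r h) ^ (-(D.c (f (nxt r h)) (f r))).toNat) * Ee k f)
         else Ee k f)
  | ttfar (r s : Fin n) (h : r.val + 1 < s.val ∨ s.val + 1 < r.val) :
      Rel D α n (Tt k r * Tt k s) (Tt k s * Tt k r)
  | braid (r : Fin n) (h : r.val + 2 < n) (f : Fin n → I) :
      Rel D α n
        (Tt k (nxt r (by omega)) * Tt k r * Tt k (nxt r (by omega)) * Ee k f -
          Tt k r * Tt k (nxt r (by omega)) * Tt k r * Ee k f)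
        (if D.c (f r) (f (nxt r (by omega))) < 0 ∧ f r = f ⟨r.val + 2, h⟩ then
          D.eps (f r) (f (nxt r (by omega))) •
            ((∑ a ∈ Finset.range ((-1 - D.c (f r) (f (nxt r (by omega)))).toNat + 1),
              Xx k r ^ a *
                Xx k (⟨r.val + 2, h⟩ : Fin n) ^
                  ((-1 - D.c (f r) (f (nxt r (by omega)))).toNat - a)) * Ee k f)
         else 0)

/-- The KLR algebra `H_α` over `k`, defined by generators and relations. -/
abbrev H (D : CartanDatum I) (α : I → ℕ) : Type :=
  RingQuot (Rel k D α (ht α))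

variable (D : CartanDatum I) (α : I → ℕ)

/-- The idempotent `1_f ∈ H_α` for `f ∈ I^α`. -/
noncomputable def E (f : Fin (ht α) → I) : H k D α :=
  RingQuot.mkAlgHom k (Rel k D α (ht α)) (Ee k f)

/-- The generator `x_r ∈ H_α`. -/
noncomputable def X (r : Fin (ht α)) : H k D α :=
  RingQuot.mkAlgHom k (Rel k D α (ht α)) (Xx k r)

/-- The generator `τ_r ∈ H_α`. -/
noncomputable def T (r : Fin (ht α)) : H k D α :=
  RingQuot.mkAlgHom k (Rel k D α (ht α)) (Tt k r)

/-- The monomial `x_1^{a 1} ⋯ x_n^{a n} ∈ H_α`. -/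
noncomputable def XA (a : Fin (ht α) → ℕ) : H k D α :=
  (List.ofFn fun r => X k D α r ^ a r).prod

/-- The product `τ_{r_1} ⋯ τ_{r_l} ∈ H_α` associated to a word `L = [r_1, …, r_l]`. -/
noncomputable def tauWord (L : List (Fin (ht α))) : H k D α :=
  (L.map (T k D α)).prod

/-- The permutation `s_{r_1} ⋯ s_{r_l}` associated to a word. -/
def wordPerm {n : ℕ} (L : List (Fin n)) : Equiv.Perm (Fin n) :=
  (L.map fun r => if h : r.val + 1 < n then Equiv.swap r (nxt r h) else 1).prod

/-- A word is valid if all its letters index simple transpositions. -/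
def ValidWord {n : ℕ} (L : List (Fin n)) : Prop := ∀ r ∈ L, r.val + 1 < n

/-- `L` is a reduced expression for the permutation `w`. -/
def IsReducedWordFor {n : ℕ} (L : List (Fin n)) (w : Equiv.Perm (Fin n)) : Prop :=
  ValidWord L ∧ wordPerm L = w ∧
    ∀ L' : List (Fin n), ValidWord L' → wordPerm L' = w → L.length ≤ L'.length

end KLR

namespace KLR

variable {I : Type} [Fintype I] [DecidableEq I]

/-- Letters for words in the generators `x_r`, `τ_r` of the KLR algebra. -/
inductive XT (n : ℕ) : Type
  | x : Fin n → XT n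
  | t : Fin n → XT n

/-- The permutation by which a generator permutes the weight idempotents. -/
def xtPerm {n : ℕ} : XT n → Equiv.Perm (Fin n)
  | .x _ => 1
  | .t r => if h : r.val + 1 < n then Equiv.swap r (nxt r h) else 1

/-- The degree of a generator at the weight `f`:
`deg (x_r 1_f) = 2 d_{f r}` and `deg (τ_r 1_f) = - d_{f r} c_{f r, f (r+1)}`. -/
def xtDeg (D : CartanDatum I) {n : ℕ} : XT n → (Fin n → I) → ℤ
  | .x r, f => 2 * D.d (f r)
  | .t r, f => if h : r.val + 1 < n then -(D.d (f r) * D.c (f r) (f (nxt r h))) else 0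

/-- The product of the permutations of the letters of a word, in the order in which the
weight `f` gets pushed through the word from the right. -/
def wordPermXT {n : ℕ} (L : List (XT n)) : Equiv.Perm (Fin n) :=
  (L.reverse.map xtPerm).prod

/-- The degree of the homogeneous element `g_1 ⋯ g_m 1_f` of the KLR algebra, where each
letter sees the weight obtained by pushing `1_f` through the letters to its right. -/
def wdeg (D : CartanDatum I) {n : ℕ} : List (XT n) → (Fin n → I) → ℤ
  | [], _ => 0
  | g :: L, f => xtDeg D g (f ∘ ⇑(wordPermXT L)) + wdeg D L f

variable (k : Type) [CommRing k]

/-- A letter, as an element of the KLR algebra. -/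
noncomputable def xtElt (D : CartanDatum I) (α : I → ℕ) : XT (ht α) → H k D α
  | .x r => X k D α r
  | .t r => T k D α r

/-- The degree-`d` homogeneous component of the KLR algebra `H_α`: the `k`-span of the
homogeneous spanning elements `g_1 ⋯ g_m 1_f` of degree `d`. -/
noncomputable def degComponent (D : CartanDatum I) (α : I → ℕ) (d : ℤ) :
    Submodule k (H k D α) :=
  Submodule.span k
    {h : H k D α | ∃ (L : List (XT (ht α))) (f : Fin (ht α) → I),
      wdeg D L f = d ∧ h = (L.map (xtElt k D α)).prod * E k D α f}

/-- `T` is a system of representatives for the left cosets `S_n / S_f`, where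
`S_f` is the stabilizer of the weight `f` for the place-permutation action. -/
def IsRepSystem {n : ℕ} (f : Fin n → I) (T : Finset (Equiv.Perm (Fin n))) : Prop :=
  ∀ w : Equiv.Perm (Fin n), ∃! w', w' ∈ T ∧ ∀ r, f ((w⁻¹ * w') r) = f r

/-- The element `z = Σ_{w ∈ T} (x_{w(1)} + ⋯ + x_{w(a)}) 1_{w · f} ∈ H_α`, where `a = α i⋆`
and `f = i⋆^{a} ⋯` starts with the block of all letters equal to `i⋆`. -/
noncomputable def zElt (D : CartanDatum I) (α : I → ℕ) (istar : I)
    (f : Fin (ht α) → I) (T : Finset (Equiv.Perm (Fin (ht α)))) : H k D α :=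
  ∑ w ∈ T,
    (∑ r ∈ Finset.univ.filter (fun r : Fin (ht α) => r.val < α istar), X k D α (w r)) *
      E k D α (f ∘ ⇑w⁻¹)

end KLR

namespace KLR

section Aux

variable {I : Type} [Fintype I] [DecidableEq I]
variable (k : Type) [CommRing k] (D : CartanDatum I) (α : I → ℕ)

private lemma mkh {a b : FreeAlgebra k (Gen I (ht α))} (h : Rel k D α (ht α) a b) :
    RingQuot.mkAlgHom k (Rel k D α (ht α)) a = RingQuot.mkAlgHom k (Rel k D α (ht α)) b :=
  RingQuot.mkAlgHom_rel k h

lemma E_mul_E (g h : Fin (ht α) → I) :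
    E k D α g * E k D α h = if g = h then E k D α g else 0 := by
  have h1 := mkh k D α (Rel.ee g h)
  rw [map_mul, apply_ite (RingQuot.mkAlgHom k (Rel k D α (ht α))), map_zero] at h1
  simpa [E] using h1

lemma E_kill (g : Fin (ht α) → I) (hg : ¬ InIalpha α g) : E k D α g = 0 := by
  have h1 := mkh k D α (Rel.ekill g hg)
  rw [map_zero] at h1
  simpa [E] using h1

lemma X_mul_E (r : Fin (ht α)) (g : Fin (ht α) → I) :
    X k D α r * E k D α g = E k D α g * X k D α r := by
  have h1 := mkh k D α (Rel.xe r g)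
  rw [map_mul, map_mul] at h1
  simpa [X, E] using h1

lemma X_mul_X (r s : Fin (ht α)) :
    X k D α r * X k D α s = X k D α s * X k D α r := by
  have h1 := mkh k D α (Rel.xx r s)
  rw [map_mul, map_mul] at h1
  simpa [X] using h1

lemma T_mul_E (s : Fin (ht α)) (hs : s.val + 1 < ht α) (g : Fin (ht α) → I) :
    T k D α s * E k D α g
      = E k D α (g ∘ ⇑(Equiv.swap s (nxt s hs))) * T k D α s := by
  have h1 := mkh k D α (Rel.te s hs g)
  rw [map_mul, map_mul] at h1
  simpa [T, E] using h1

lemma T_kill (s : Fin (ht α)) (hs : ¬ s.val + 1 < ht α) : T k D α s = 0 := by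
  have h1 := mkh k D α (Rel.tkill s hs)
  rw [map_zero] at h1
  simpa [T] using h1

lemma T_X_E (s : Fin (ht α)) (hs : s.val + 1 < ht α) (u : Fin (ht α))
    (g : Fin (ht α) → I) :
    T k D α s * X k D α u * E k D α g
      = X k D α (Equiv.swap s (nxt s hs) u) * T k D α s * E k D α g
        - (if g s = g (nxt s hs) then
            ((if u = s then (1 : H k D α) else 0) - (if u = nxt s hs then 1 else 0)) *
              E k D α g
          else 0) := by
  have e1 : (Equiv.swap s (nxt s hs)) u = nxt s hs ↔ u = s := by
    rw [Equiv.apply_eq_iff_eq_symm_apply, Equiv.symm_swap, Equiv.swap_apply_right]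
  have e2 : (Equiv.swap s (nxt s hs)) u = s ↔ u = nxt s hs := by
    rw [Equiv.apply_eq_iff_eq_symm_apply, Equiv.symm_swap, Equiv.swap_apply_left]
  have h1 := mkh k D α (Rel.xte (Equiv.swap s (nxt s hs) u) s hs g)
  simp only [Equiv.swap_apply_self, map_sub, map_mul, apply_ite
    (RingQuot.mkAlgHom k (Rel k D α (ht α))), map_zero, map_one, e1, e2] at h1
  rw [sub_eq_iff_eq_add] at h1
  simp only [X, T, E]
  rw [h1, add_sub_cancel_left]

/-- The canonical form of `z`, as a sum over all weights. -/
noncomputable def Zc (istar : I) (g : Fin (ht α) → I) : H k D α :=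
  ∑ u ∈ Finset.univ.filter (fun u => g u = istar), X k D α u

noncomputable def Zel (istar : I) : H k D α :=
  ∑ g : Fin (ht α) → I, Zc k D α istar g * E k D α g

lemma E_comm_Zc (istar : I) (g h : Fin (ht α) → I) :
    E k D α h * Zc k D α istar g = Zc k D α istar g * E k D α h := by
  rw [Zc, Finset.mul_sum, Finset.sum_mul]
  exact Finset.sum_congr rfl fun u _ => (X_mul_E k D α u h).symm

lemma X_comm_Zc (istar : I) (g : Fin (ht α) → I) (s : Fin (ht α)) :
    X k D α s * Zc k D α istar g = Zc k D α istar g * X k D α s := by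
  rw [Zc, Finset.mul_sum, Finset.sum_mul]
  exact Finset.sum_congr rfl fun u _ => X_mul_X k D α s u

lemma E_comm_Zel (istar : I) (h : Fin (ht α) → I) :
    E k D α h * Zel k D α istar = Zel k D α istar * E k D α h := by
  have h1 : Zel k D α istar * E k D α h = Zc k D α istar h * E k D α h := by
    rw [Zel, Finset.sum_mul, Finset.sum_eq_single h]
    · rw [mul_assoc, E_mul_E, if_pos rfl]
    · intro g _ hgh; rw [mul_assoc, E_mul_E, if_neg hgh, mul_zero]
    · intro habs; exact absurd (Finset.mem_univ h) habs
  have h2 : E k D α h * Zel k D α istar = Zc k D α istar h * E k D α h := by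
    rw [Zel, Finset.mul_sum, Finset.sum_eq_single h]
    · rw [← mul_assoc, E_comm_Zc, mul_assoc, E_mul_E, if_pos rfl]
    · intro g _ hgh
      rw [← mul_assoc, E_comm_Zc, mul_assoc, E_mul_E, if_neg (fun e => hgh e.symm),
        mul_zero]
    · intro habs; exact absurd (Finset.mem_univ h) habs
  rw [h1, h2]

lemma X_comm_Zel (istar : I) (s : Fin (ht α)) :
    X k D α s * Zel k D α istar = Zel k D α istar * X k D α s := by
  rw [Zel, Finset.mul_sum, Finset.sum_mul]
  refine Finset.sum_congr rfl fun g _ => ?_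
  rw [← mul_assoc, X_comm_Zc, mul_assoc, X_mul_E, ← mul_assoc]

lemma comp_swap_swap (s : Fin (ht α)) (hs : s.val + 1 < ht α) (g : Fin (ht α) → I) :
    (g ∘ ⇑(Equiv.swap s (nxt s hs))) ∘ ⇑(Equiv.swap s (nxt s hs)) = g := by
  ext r; simp [Equiv.swap_apply_self]

lemma E_T (s : Fin (ht α)) (hs : s.val + 1 < ht α) (g : Fin (ht α) → I) :
    E k D α g * T k D α s = T k D α s * E k D α (g ∘ ⇑(Equiv.swap s (nxt s hs))) := by
  have := T_mul_E k D α s hs (g ∘ ⇑(Equiv.swap s (nxt s hs)))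
  rw [comp_swap_swap] at this
  exact this.symm

lemma Zc_swap (istar : I) (s : Fin (ht α)) (hs : s.val + 1 < ht α)
    (g : Fin (ht α) → I) :
    ∑ u ∈ Finset.univ.filter (fun u => g u = istar), X k D α (Equiv.swap s (nxt s hs) u)
      = Zc k D α istar (g ∘ ⇑(Equiv.swap s (nxt s hs))) := by
  rw [Zc]
  refine Finset.sum_nbij' (fun u => Equiv.swap s (nxt s hs) u)
    (fun u => Equiv.swap s (nxt s hs) u) ?_ ?_ ?_ ?_ ?_ <;>
    simp [Finset.mem_filter, Equiv.swap_apply_self]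

lemma T_comm_Zel (istar : I) (s : Fin (ht α)) :
    T k D α s * Zel k D α istar = Zel k D α istar * T k D α s := by
  by_cases hs : s.val + 1 < ht α
  · set σ := Equiv.swap s (nxt s hs) with hσ
    have hrsum : ∀ g : Fin (ht α) → I,
        (∑ u ∈ Finset.univ.filter (fun u => g u = istar),
          (if g s = g (nxt s hs) then
            ((if u = s then (1 : H k D α) else 0) - (if u = nxt s hs then 1 else 0)) *
              E k D α g
          else 0)) = 0 := by
      intro g
      by_cases hc : g s = g (nxt s hs)
      · simp only [if_pos hc, sub_mul, one_mul, zero_mul, ite_mul,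
          Finset.sum_sub_distrib, Finset.sum_ite_eq',
          Finset.mem_filter, Finset.mem_univ, true_and]
        rw [hc]
        exact sub_self _
      · simp [hc]
    have lhs_eq : T k D α s * Zel k D α istar
        = ∑ g : Fin (ht α) → I, Zc k D α istar (g ∘ ⇑σ) * (T k D α s * E k D α g) := by
      rw [Zel, Finset.mul_sum]
      refine Finset.sum_congr rfl fun g _ => ?_
      rw [Zc, Finset.sum_mul, Finset.mul_sum]
      have : ∀ u ∈ Finset.univ.filter (fun u => g u = istar),
          T k D α s * (X k D α u * E k D α g)
            = X k D α (σ u) * (T k D α s * E k D α g)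
              - (if g s = g (nxt s hs) then
                  ((if u = s then (1 : H k D α) else 0) -
                    (if u = nxt s hs then 1 else 0)) * E k D α g
                else 0) := by
        intro u _
        rw [← mul_assoc, T_X_E k D α s hs u g, mul_assoc]
      rw [Finset.sum_congr rfl this, Finset.sum_sub_distrib, hrsum g, sub_zero,
        ← Finset.sum_mul, Zc_swap k D α istar s hs g]
    have rhs_eq : Zel k D α istar * T k D α s
        = ∑ g : Fin (ht α) → I, Zc k D α istar g * (T k D α s * E k D α (g ∘ ⇑σ)) := by
      rw [Zel, Finset.sum_mul]
      refine Finset.sum_congr rfl fun g _ => ?_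
      rw [mul_assoc, E_T k D α s hs g]
    rw [lhs_eq, rhs_eq]
    have hbij : Function.Bijective (fun g : Fin (ht α) → I => g ∘ ⇑σ) :=
      Function.Involutive.bijective (fun g => comp_swap_swap α s hs g)
    refine (Fintype.sum_bijective _ hbij _ _ fun g => ?_).symm
    rw [comp_swap_swap α s hs g]
  · rw [T_kill k D α s hs, zero_mul, mul_zero]

lemma Zel_central (istar : I) : Zel k D α istar ∈ Subalgebra.center k (H k D α) := by
  rw [Subalgebra.mem_center_iff]
  intro b
  obtain ⟨c, rfl⟩ := RingQuot.mkAlgHom_surjective k (Rel k D α (ht α)) b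
  induction c using FreeAlgebra.induction with
  | grade0 r =>
    rw [AlgHom.commutes]
    exact Algebra.commutes r _
  | grade1 x =>
    cases x with
    | e g => exact E_comm_Zel k D α istar g
    | x r => exact X_comm_Zel k D α istar r
    | t r => exact T_comm_Zel k D α istar r
  | mul a b ha hb => rw [map_mul, mul_assoc, hb, ← mul_assoc, ha, mul_assoc]
  | add a b ha hb => rw [map_add, add_mul, mul_add, ha, hb]

end Aux

section Comb

variable {I : Type} [Fintype I] [DecidableEq I]

lemma InIalpha_comp (α : I → ℕ) {n : ℕ} (f : Fin n → I) (hf : InIalpha α f)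
    (w : Equiv.Perm (Fin n)) : InIalpha α (f ∘ ⇑w) := by
  intro i
  rw [← hf i]
  refine Finset.card_bij' (fun r _ => w r) (fun r _ => w⁻¹ r) ?_ ?_ ?_ ?_ <;>
    simp [Finset.mem_filter]

lemma exists_perm (α : I → ℕ) {n : ℕ} (f g : Fin n → I) (hf : InIalpha α f)
    (hg : InIalpha α g) : ∃ w : Equiv.Perm (Fin n), ∀ r, g (w r) = f r := by
  have hcard : ∀ i : I, Fintype.card {r : Fin n // f r = i}
      = Fintype.card {r : Fin n // g r = i} := by
    intro i
    rw [Fintype.card_subtype, Fintype.card_subtype, hf i, hg i]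
  refine ⟨(Equiv.sigmaFiberEquiv f).symm.trans
    ((Equiv.sigmaCongrRight fun i => Fintype.equivOfCardEq (hcard i)).trans
      (Equiv.sigmaFiberEquiv g)), fun r => ?_⟩
  exact (Fintype.equivOfCardEq (hcard (f r)) ⟨r, rfl⟩).2

lemma perm_apply_inv_self {β : Type*} (w : Equiv.Perm β) (x : β) : w (w⁻¹ x) = x :=
  w.apply_symm_apply x

lemma perm_inv_apply_self {β : Type*} (w : Equiv.Perm β) (x : β) : w⁻¹ (w x) = x :=
  w.symm_apply_apply x

end Comb

section Main

variable {I : Type} [Fintype I] [DecidableEq I]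
variable (k : Type) [CommRing k] (D : CartanDatum I) (α : I → ℕ)

lemma zElt_eq_Zel (istar : I) (f : Fin (ht α) → I) (hf : InIalpha α f)
    (hfirst : ∀ r : Fin (ht α), f r = istar ↔ r.val < α istar)
    (T : Finset (Equiv.Perm (Fin (ht α)))) (hT : IsRepSystem f T) :
    zElt k D α istar f T = Zel k D α istar := by
  have hvanish : ∑ g ∈ Finset.univ.filter (fun g : Fin (ht α) → I => InIalpha α g),
      Zc k D α istar g * E k D α g = Zel k D α istar := by
    refine Finset.sum_subset (Finset.filter_subset _ _) fun g _ hg => ?_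
    rw [E_kill k D α g (by simpa using hg), mul_zero]
  rw [← hvanish, zElt]
  refine Finset.sum_bij (fun w _ => f ∘ ⇑w⁻¹) ?_ ?_ ?_ ?_
  · intro w _
    simp only [Finset.mem_filter, Finset.mem_univ, true_and]
    exact InIalpha_comp α f hf w⁻¹
  · -- injectivity
    intro w hw w' hw' heq
    obtain ⟨u, _, huniq⟩ := hT w
    have h1 : w = u := huniq w ⟨hw, fun r => by simp⟩
    have h2 : w' = u := by
      refine huniq w' ⟨hw', fun r => ?_⟩
      have := congrFun heq (w' r)
      simp only [Function.comp_apply] at this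
      simpa [Equiv.Perm.mul_apply] using this
    rw [h1, h2]
  · -- surjectivity
    intro g hg
    have hg' : InIalpha α g := by simpa using hg
    obtain ⟨v, hv⟩ := exists_perm α g f hg' hf
    -- hv : ∀ r, f (v r) = g r, so g = f ∘ v ... we want w with f ∘ w⁻¹ = g
    obtain ⟨w', hw', _⟩ := hT v⁻¹
    refine ⟨w', hw'.1, ?_⟩
    funext u
    have h3 := hw'.2 (w'⁻¹ u)
    simp only [Equiv.Perm.mul_apply, perm_apply_inv_self, inv_inv] at h3
    simp only [Function.comp_apply]
    rw [← h3]
    exact hv u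
  · -- values
    intro w _
    congr 1
    rw [Zc]
    refine Finset.sum_nbij' (fun r => w r) (fun u => w⁻¹ u) ?_ ?_ ?_ ?_ ?_ <;>
      simp only [Finset.mem_filter, Finset.mem_univ, true_and, Function.comp_apply,
        perm_inv_apply_self, perm_apply_inv_self, implies_true]
    · intro r hr
      rw [hfirst]
      exact hr
    · intro u hu
      rw [← hfirst]
      exact hu

lemma zElt_deg2 (istar : I) (hd : ∀ i, D.d i = 1) (f : Fin (ht α) → I)
    (T : Finset (Equiv.Perm (Fin (ht α)))) :
    zElt k D α istar f T ∈ degComponent k D α 2 := by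
  rw [zElt]
  refine Submodule.sum_mem _ fun w _ => ?_
  rw [Finset.sum_mul]
  refine Submodule.sum_mem _ fun r _ => ?_
  refine Submodule.subset_span ?_
  refine ⟨[XT.x (w r)], f ∘ ⇑w⁻¹, ?_, ?_⟩
  · simp [wdeg, xtDeg, wordPermXT, hd]
  · simp [xtElt]

end Main

end KLR

open KLR

/-!
STATEMENT 4: for a field `k` and a symmetric Cartan matrix (simply-laced type, so all
`d_i = 1` by the normalization), let `α ∈ Q⁺` with `a_{i⋆} = α i⋆ > 0`, and let
`f = i⋆^{a_{i⋆}} i_2^{a_{i_2}} ⋯ ∈ I^α` be the associated block word.  Then the element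
`z = Σ_{w ∈ S^f} (x_{w(1)} + ⋯ + x_{w(a_{i⋆})}) 1_{w·f}` is independent of the choice of the
system `S^f` of coset representatives of `S_n / S_f`, is central in `H_{α,k}`, and is
homogeneous of degree `2`. -/
theorem stmt_4 {I : Type} [Fintype I] [DecidableEq I] (D : CartanDatum I)
    (hsymm : ∀ i j, D.c i j = D.c j i) (hd : ∀ i, D.d i = 1)
    (k : Type) [Field k] (α : I → ℕ) (istar : I) (hstar : 0 < α istar)
    (f : Fin (ht α) → I) (hf : InIalpha α f)
    (hfirst : ∀ r : Fin (ht α), f r = istar ↔ r.val < α istar)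
    (hblocks : ∀ r s t : Fin (ht α), r ≤ t → t ≤ s → f r = f s → f t = f r)
    (T T' : Finset (Equiv.Perm (Fin (ht α))))
    (hT : IsRepSystem f T) (hT' : IsRepSystem f T') :
    zElt k D α istar f T = zElt k D α istar f T' ∧
      zElt k D α istar f T ∈ Subalgebra.center k (H k D α) ∧
      zElt k D α istar f T ∈ degComponent k D α 2 := by
  refine ⟨?_, ?_, ?_⟩
  · rw [zElt_eq_Zel k D α istar f hf hfirst T hT, zElt_eq_Zel k D α istar f hf hfirst T' hT']
  · rw [zElt_eq_Zel k D α istar f hf hfirst T hT]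
    exact Zel_central k D α istar
  · exact zElt_deg2 k D α istar hd f T
end

section
/- Let α ∈ Q⁺ and let λ = (λ_1 ⪰ ⋯ ⪰ λ_l) and μ = (μ_1 ⪰ ⋯ ⪰ μ_m) be Kostant partitions of α. If there is a partition {1, …, l} = A_1 ⊔ ⋯ ⊔ A_m into disjoint nonempty subsets such that μ_b = Σ_{a ∈ A_b} λ_a for all b = 1, …, m, then λ ≥ μ in the bilexicographic order on KP(α). -/
open scoped BigOperators

namespace KLR

variable {I : Type} [Fintype I] [DecidableEq I]

/-- The simple root `α_i`, as an integer vector in the root lattice. -/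
def simple (i : I) : I → ℤ := fun j => if j = i then 1 else 0

/-- The simple reflection `s_i` acting on the root lattice:
`s_i(v) = v - (Σ_t c_{i,t} v_t) α_i`. -/
def srefl (D : CartanDatum I) (i : I) (v : I → ℤ) : I → ℤ :=
  fun j => v j - (if j = i then ∑ t, D.c i t * v t else 0)

/-- `v` is a root of the (finite type) root system with Cartan matrix `C`:
it lies in the Weyl group orbit of a simple root. -/
def IsRoot (D : CartanDatum I) (v : I → ℤ) : Prop :=
  ∃ (L : List I) (i : I), v = L.foldr (srefl D) (simple i)

/-- `v` is a positive root: a root all of whose coordinates are nonnegative. -/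
def IsPosRoot (D : CartanDatum I) (v : I → ℤ) : Prop :=
  IsRoot D v ∧ ∀ j, 0 ≤ v j

/-- `le` is a convex order on the set `Φ⁺` of positive roots: a total order such that
whenever `γ`, `β` and `γ + β` are all positive roots, `γ ⪯ β` implies
`γ ⪯ γ + β ⪯ β`. -/
structure IsConvexOrder (D : CartanDatum I) (le : (I → ℤ) → (I → ℤ) → Prop) : Prop where
  refl : ∀ v, IsPosRoot D v → le v v
  trans : ∀ u v w, IsPosRoot D u → IsPosRoot D v → IsPosRoot D w →
      le u v → le v w → le u w
  antisymm : ∀ u v, IsPosRoot D u → IsPosRoot D v → le u v → le v u → u = v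
  total : ∀ u v, IsPosRoot D u → IsPosRoot D v → le u v ∨ le v u
  convex : ∀ γ β, IsPosRoot D γ → IsPosRoot D β → IsPosRoot D (γ + β) → le γ β →
      le γ (γ + β) ∧ le (γ + β) β

/-- `L` is a Kostant partition of `α`: a weakly decreasing (for the convex order `le`)
list of positive roots summing to `α`. -/
def IsKP (D : CartanDatum I) (le : (I → ℤ) → (I → ℤ) → Prop) (α : I → ℕ)
    (L : List (I → ℤ)) : Prop :=
  (∀ v ∈ L, IsPosRoot D v) ∧ List.Pairwise (fun a b => le b a) L ∧
    L.sum = fun i => (α i : ℤ)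

/-- `L` is lexicographically smaller than `M` for the strict order `lt`:
they agree up to position `t`, where the entry of `L` is `lt`-smaller. -/
def LexLt {V : Type} (lt : V → V → Prop) (L M : List V) : Prop :=
  ∃ (t : ℕ) (h1 : t < L.length) (h2 : t < M.length),
    L.take t = M.take t ∧ lt (L.get ⟨t, h1⟩) (M.get ⟨t, h2⟩)

/-- The strict bilexicographic order on Kostant partitions: `L < M` iff `L` is
lexicographically smaller than `M` and the reversed list `L.reverse` is lexicographically
bigger than `M.reverse`. -/
def BilexLt {V : Type} (le : V → V → Prop) (L M : List V) : Prop :=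
  LexLt (fun a b => le a b ∧ a ≠ b) L M ∧
    LexLt (fun a b => le b a ∧ a ≠ b) L.reverse M.reverse

end KLR

open KLR

/-!
STATEMENT 8: if `λ = (λ_1 ⪰ ⋯ ⪰ λ_l)` and `μ = (μ_1 ⪰ ⋯ ⪰ μ_m)` are Kostant partitions of
`α` and `{1,…,l} = A_1 ⊔ ⋯ ⊔ A_m` is a partition into disjoint nonempty pieces with
`μ_b = Σ_{a ∈ A_b} λ_a` for all `b`, then `λ ≥ μ` in the bilexicographic order. -/

/-! ### Auxiliary development -/

namespace KLR

variable {I : Type} [Fintype I] [DecidableEq I]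

/-- The symmetrized bilinear form. -/
def bform (D : CartanDatum I) (u v : I → ℤ) : ℤ :=
  ∑ i, ∑ j, D.d i * D.c i j * u i * v j

/-- The pairing `⟨α_i^∨, v⟩`. -/
def pairf (D : CartanDatum I) (i : I) (v : I → ℤ) : ℤ := ∑ t, D.c i t * v t

variable (D : CartanDatum I)

lemma bform_symm (u v : I → ℤ) : bform D u v = bform D v u := by
  unfold bform
  rw [Finset.sum_comm]
  refine Finset.sum_congr rfl fun j _ => Finset.sum_congr rfl fun i _ => ?_
  rw [D.symm i j]; ring

lemma bform_add_left (u v w : I → ℤ) :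
    bform D (u + v) w = bform D u w + bform D v w := by
  unfold bform
  rw [← Finset.sum_add_distrib]
  refine Finset.sum_congr rfl fun i _ => ?_
  rw [← Finset.sum_add_distrib]
  exact Finset.sum_congr rfl fun j _ => by simp [Pi.add_apply]; ring

lemma bform_smul_left (k : ℤ) (u v : I → ℤ) :
    bform D (k • u) v = k * bform D u v := by
  unfold bform
  rw [Finset.mul_sum]
  refine Finset.sum_congr rfl fun i _ => ?_
  rw [Finset.mul_sum]
  exact Finset.sum_congr rfl fun j _ => by simp [Pi.smul_apply, smul_eq_mul]; ring

lemma bform_add_right (u v w : I → ℤ) :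
    bform D u (v + w) = bform D u v + bform D u w := by
  rw [bform_symm, bform_add_left, bform_symm D v, bform_symm D w]

lemma bform_smul_right (k : ℤ) (u v : I → ℤ) :
    bform D u (k • v) = k * bform D u v := by
  rw [bform_symm, bform_smul_left, bform_symm]

lemma bform_neg_left (u v : I → ℤ) : bform D (-u) v = -bform D u v := by
  have := bform_smul_left D (-1) u v
  simpa using this

lemma bform_sub_left (u v w : I → ℤ) :
    bform D (u - v) w = bform D u w - bform D v w := by
  rw [sub_eq_add_neg, bform_add_left, bform_neg_left]; ring

lemma bform_sub_right (u v w : I → ℤ) :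
    bform D u (v - w) = bform D u v - bform D u w := by
  rw [bform_symm, bform_sub_left, bform_symm D v, bform_symm D w]

lemma bform_zero_right (u : I → ℤ) : bform D u 0 = 0 := by
  unfold bform
  refine Finset.sum_eq_zero fun i _ => Finset.sum_eq_zero fun j _ => by simp

lemma bform_zero_left (v : I → ℤ) : bform D 0 v = 0 := by
  rw [bform_symm, bform_zero_right]

lemma bform_sum_right {X : Type} (u : I → ℤ) (s : Finset X) (f : X → I → ℤ) :
    bform D u (∑ a ∈ s, f a) = ∑ a ∈ s, bform D u (f a) := by
  classical
  induction s using Finset.induction with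
  | empty => simp [bform_zero_right]
  | insert _ _ hx ih => rename_i a s
                        rw [Finset.sum_insert hx, Finset.sum_insert hx, bform_add_right, ih]

lemma bform_self_pos {v : I → ℤ} (hv : v ≠ 0) : 0 < bform D v v := by
  have hq : (fun i => (v i : ℚ)) ≠ 0 := by
    intro h
    apply hv
    funext j
    have := congrFun h j
    simpa using this
  have h := D.finiteType _ hq
  have hcast : ((bform D v v : ℤ) : ℚ)
      = ∑ i, ∑ j, (v i : ℚ) * ((D.d i * D.c i j : ℤ) : ℚ) * (v j : ℚ) := by
    unfold bform
    push_cast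
    refine Finset.sum_congr rfl fun i _ => Finset.sum_congr rfl fun j _ => by ring
  have : (0 : ℚ) < ((bform D v v : ℤ) : ℚ) := by rw [hcast]; exact h
  exact_mod_cast this

lemma bform_self_nonneg (v : I → ℤ) : 0 ≤ bform D v v := by
  by_cases h : v = 0
  · subst h; rw [bform_zero_right]
  · exact le_of_lt (bform_self_pos D h)

lemma bform_discr (u v : I → ℤ) :
    bform D (bform D v v • u - bform D u v • v) (bform D v v • u - bform D u v • v)
      = bform D v v * (bform D u u * bform D v v - bform D u v ^ 2) := by
  simp only [bform_sub_left, bform_sub_right, bform_smul_left, bform_smul_right]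
  rw [bform_symm D v u]
  ring

lemma bform_cauchy (u v : I → ℤ) : bform D u v ^ 2 ≤ bform D u u * bform D v v := by
  by_cases hv : v = 0
  · subst hv; rw [bform_zero_right, bform_zero_right]; simp
  · have h1 := bform_self_nonneg D (bform D v v • u - bform D u v • v)
    rw [bform_discr] at h1
    have h2 := bform_self_pos D hv
    nlinarith

lemma bform_cauchy_eq {u v : I → ℤ} (hv : v ≠ 0)
    (h : bform D u v ^ 2 = bform D u u * bform D v v) :
    bform D v v • u = bform D u v • v := by
  have h1 : bform D (bform D v v • u - bform D u v • v) (bform D v v • u - bform D u v • v) = 0 := by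
    rw [bform_discr, h]; ring
  by_contra hne
  have hne' : bform D v v • u - bform D u v • v ≠ 0 := fun hz => hne (by
    have := sub_eq_zero.mp hz; exact this)
  have := bform_self_pos D hne'
  omega

end KLR
namespace KLR

variable {I : Type} [Fintype I] [DecidableEq I] (D : CartanDatum I)

lemma srefl_eq (i : I) (v : I → ℤ) :
    srefl D i v = v - pairf D i v • simple i := by
  funext j
  simp only [srefl, pairf, Pi.sub_apply, Pi.smul_apply, simple, smul_eq_mul]
  by_cases h : j = i <;> simp [h]

lemma pairf_add (i : I) (u v : I → ℤ) :
    pairf D i (u + v) = pairf D i u + pairf D i v := by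
  unfold pairf
  rw [← Finset.sum_add_distrib]
  exact Finset.sum_congr rfl fun t _ => by simp [mul_add]

lemma pairf_smul (i : I) (k : ℤ) (v : I → ℤ) :
    pairf D i (k • v) = k * pairf D i v := by
  unfold pairf
  rw [Finset.mul_sum]
  exact Finset.sum_congr rfl fun t _ => by simp [Pi.smul_apply, smul_eq_mul]; ring

lemma pairf_neg (i : I) (v : I → ℤ) : pairf D i (-v) = -pairf D i v := by
  have := pairf_smul D i (-1) v; simpa using this

lemma pairf_sub (i : I) (u v : I → ℤ) :
    pairf D i (u - v) = pairf D i u - pairf D i v := by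
  rw [sub_eq_add_neg, pairf_add, pairf_neg]; ring

lemma pairf_simple_self (i : I) : pairf D i (simple i) = 2 := by
  unfold pairf simple
  rw [Finset.sum_eq_single i]
  · simp [D.c_diag i]
  · intro t _ ht; simp [ht]
  · simp

lemma bform_simple_left (i : I) (v : I → ℤ) :
    bform D (simple i) v = D.d i * pairf D i v := by
  unfold bform simple pairf
  rw [Finset.sum_eq_single i]
  · rw [Finset.mul_sum]
    refine Finset.sum_congr rfl fun j _ => by simp; ring
  · intro b _ hb
    refine Finset.sum_eq_zero fun j _ => by simp [hb]
  · simp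

lemma bform_simple_right (v : I → ℤ) (i : I) :
    bform D v (simple i) = D.d i * pairf D i v := by
  rw [bform_symm, bform_simple_left]

lemma srefl_srefl (i : I) (v : I → ℤ) : srefl D i (srefl D i v) = v := by
  rw [srefl_eq, srefl_eq, pairf_sub, pairf_smul, pairf_simple_self]
  funext j
  simp only [Pi.sub_apply, Pi.smul_apply, smul_eq_mul]
  ring

lemma srefl_add (i : I) (u v : I → ℤ) :
    srefl D i (u + v) = srefl D i u + srefl D i v := by
  rw [srefl_eq, srefl_eq, srefl_eq, pairf_add]
  funext j
  simp only [Pi.add_apply, Pi.sub_apply, Pi.smul_apply, smul_eq_mul]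
  ring

lemma srefl_smul (i : I) (k : ℤ) (v : I → ℤ) :
    srefl D i (k • v) = k • srefl D i v := by
  rw [srefl_eq, srefl_eq, pairf_smul]
  funext j
  simp only [Pi.sub_apply, Pi.smul_apply, smul_eq_mul]
  ring

lemma srefl_neg (i : I) (v : I → ℤ) : srefl D i (-v) = -srefl D i v := by
  have := srefl_smul D i (-1) v; simpa using this

lemma srefl_sub (i : I) (u v : I → ℤ) :
    srefl D i (u - v) = srefl D i u - srefl D i v := by
  rw [sub_eq_add_neg, srefl_add, srefl_neg, sub_eq_add_neg]

lemma bform_srefl (i : I) (u v : I → ℤ) :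
    bform D (srefl D i u) (srefl D i v) = bform D u v := by
  rw [srefl_eq, srefl_eq]
  simp only [bform_sub_left, bform_sub_right, bform_smul_left, bform_smul_right,
    bform_simple_left, bform_simple_right, pairf_simple_self, pairf_sub, pairf_smul]
  ring

/-- Abbreviation for acting by a word of simple reflections. -/
def Wf (D : CartanDatum I) (L : List I) (v : I → ℤ) : I → ℤ := L.foldr (srefl D) v

lemma Wf_nil (v : I → ℤ) : Wf D [] v = v := rfl

lemma Wf_cons (i : I) (L : List I) (v : I → ℤ) :
    Wf D (i :: L) v = srefl D i (Wf D L v) := rfl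

lemma Wf_append (L M : List I) (v : I → ℤ) :
    Wf D (L ++ M) v = Wf D L (Wf D M v) := by
  unfold Wf
  rw [List.foldr_append]

lemma Wf_sub (L : List I) (u v : I → ℤ) :
    Wf D L (u - v) = Wf D L u - Wf D L v := by
  induction L with
  | nil => rfl
  | cons i L ih => rw [Wf_cons, Wf_cons, Wf_cons, ih, srefl_sub]

lemma Wf_smul (L : List I) (k : ℤ) (v : I → ℤ) :
    Wf D L (k • v) = k • Wf D L v := by
  induction L with
  | nil => rfl
  | cons i L ih => rw [Wf_cons, Wf_cons, ih, srefl_smul]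

lemma Wf_neg (L : List I) (v : I → ℤ) : Wf D L (-v) = -Wf D L v := by
  have := Wf_smul D L (-1) v; simpa using this

lemma Wf_bform (L : List I) (u v : I → ℤ) :
    bform D (Wf D L u) (Wf D L v) = bform D u v := by
  induction L with
  | nil => rfl
  | cons i L ih => rw [Wf_cons, Wf_cons, bform_srefl, ih]

lemma Wf_reverse_cancel (L : List I) (v : I → ℤ) :
    Wf D L (Wf D L.reverse v) = v := by
  induction L generalizing v with
  | nil => rfl
  | cons i L ih =>
    rw [List.reverse_cons, Wf_append, Wf_cons]
    show srefl D i (Wf D L (Wf D L.reverse (Wf D [i] v))) = v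
    rw [ih, Wf_cons, Wf_nil, srefl_srefl]

lemma Wf_reverse_cancel' (L : List I) (v : I → ℤ) :
    Wf D L.reverse (Wf D L v) = v := by
  have := Wf_reverse_cancel D L.reverse v
  rwa [List.reverse_reverse] at this

end KLR
namespace KLR

variable {I : Type} [Fintype I] [DecidableEq I] (D : CartanDatum I)

lemma isRoot_iff (v : I → ℤ) : IsRoot D v ↔ ∃ (L : List I) (i : I), v = Wf D L (simple i) :=
  Iff.rfl

lemma isRoot_Wf {v : I → ℤ} (L : List I) (hv : IsRoot D v) : IsRoot D (Wf D L v) := by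
  obtain ⟨M, i, rfl⟩ := hv
  exact ⟨L ++ M, i, (Wf_append D L M _).symm⟩

lemma isRoot_srefl {v : I → ℤ} (i : I) (hv : IsRoot D v) : IsRoot D (srefl D i v) :=
  isRoot_Wf D [i] hv

lemma srefl_simple_self (i : I) : srefl D i (simple i) = -simple i := by
  rw [srefl_eq, pairf_simple_self]
  funext j
  simp only [Pi.sub_apply, Pi.smul_apply, Pi.neg_apply, smul_eq_mul]
  ring

lemma isRoot_neg {v : I → ℤ} (hv : IsRoot D v) : IsRoot D (-v) := by
  obtain ⟨L, i, hLi⟩ := hv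
  have hW : v = Wf D L (simple i) := hLi
  subst hW
  refine ⟨L ++ [i], i, ?_⟩
  show -Wf D L (simple i) = Wf D (L ++ [i]) (simple i)
  rw [Wf_append, Wf_cons, Wf_nil, srefl_simple_self, Wf_neg]

lemma bform_self_root {v : I → ℤ} (hv : IsRoot D v) : ∃ i, bform D v v = 2 * D.d i := by
  obtain ⟨L, i, hLi⟩ := hv
  have hW : v = Wf D L (simple i) := hLi
  subst hW
  refine ⟨i, ?_⟩
  rw [Wf_bform, bform_simple_left, pairf_simple_self]
  ring

lemma root_ne_zero {v : I → ℤ} (hv : IsRoot D v) : v ≠ 0 := by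
  obtain ⟨i, hi⟩ := bform_self_root D hv
  intro h
  rw [h, bform_zero_right] at hi
  have := D.d_pos i
  omega

lemma root_bform_pos {v : I → ℤ} (hv : IsRoot D v) : 0 < bform D v v :=
  bform_self_pos D (root_ne_zero D hv)

lemma dvd_srefl {g : ℤ} {v : I → ℤ} (i : I) (h : ∀ j, g ∣ v j) : ∀ j, g ∣ srefl D i v j := by
  intro j
  unfold srefl
  refine dvd_sub (h j) ?_
  by_cases hj : j = i
  · simp only [hj, if_pos rfl]
    exact Finset.dvd_sum fun t _ => Dvd.dvd.mul_left (h t) _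
  · simp [hj]

lemma dvd_of_dvd_Wf {g : ℤ} {v : I → ℤ} (L : List I) (h : ∀ j, g ∣ Wf D L v j) :
    ∀ j, g ∣ v j := by
  induction L with
  | nil => exact h
  | cons i L ih =>
    refine ih fun j => ?_
    have : Wf D L v = srefl D i (srefl D i (Wf D L v)) := (srefl_srefl D i _).symm
    rw [this]
    exact dvd_srefl D i (fun k => h k) j

lemma root_primitive {v : I → ℤ} (hv : IsRoot D v) {g : ℤ} (h : ∀ j, g ∣ v j) : g ∣ 1 := by
  obtain ⟨L, i, hLi⟩ := hv
  have hW : v = Wf D L (simple i) := hLi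
  subst hW
  have := dvd_of_dvd_Wf D L h i
  simpa [simple] using this

lemma reflect_root {β : I → ℤ} (hβ : IsRoot D β) :
    ∃ (p : (I → ℤ) → ℤ) (dd : ℤ), 0 < dd ∧ bform D β β = 2 * dd ∧
      (∀ v, bform D β v = dd * p v) ∧
      (∀ v, IsRoot D v → IsRoot D (v - p v • β)) := by
  obtain ⟨L, i, hLi⟩ := hβ
  have hW : β = Wf D L (simple i) := hLi
  subst hW
  refine ⟨fun v => pairf D i (Wf D L.reverse v), D.d i, D.d_pos i, ?_, ?_, ?_⟩
  · rw [Wf_bform, bform_simple_left, pairf_simple_self]; ring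
  · intro v
    conv_lhs => rw [show v = Wf D L (Wf D L.reverse v) from (Wf_reverse_cancel D L v).symm]
    rw [Wf_bform, bform_simple_left]
  · intro v hv
    have hrw : v - pairf D i (Wf D L.reverse v) • Wf D L (simple i)
        = Wf D L (srefl D i (Wf D L.reverse v)) := by
      rw [srefl_eq, Wf_sub, Wf_smul, Wf_reverse_cancel]
    rw [hrw]
    exact isRoot_Wf D L (isRoot_srefl D i (isRoot_Wf D L.reverse hv))

lemma root_eq_of_proportional {α β : I → ℤ} (hα : IsRoot D α) (hβ : IsRoot D β)
    (hM : 0 < bform D α β) (h : bform D β β • α = bform D α β • β) : α = β := by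
  set N := bform D β β with hNdef
  set M := bform D α β with hMdef
  have hNpos : 0 < N := root_bform_pos D hβ
  set g : ℤ := (Int.gcd N M : ℤ) with hgdef
  have hgnat : 0 < Int.gcd N M := Int.gcd_pos_of_ne_zero_left M (by omega)
  have hgpos : 0 < g := Int.natCast_pos.mpr hgnat
  have hgN : g ∣ N := Int.gcd_dvd_left N M
  have hgM : g ∣ M := Int.gcd_dvd_right N M
  set n := N / g with hndef
  set m := M / g with hmdef
  have hn : g * n = N := Int.mul_ediv_cancel' hgN
  have hm : g * m = M := Int.mul_ediv_cancel' hgM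
  have hnm : ∀ j, n * α j = m * β j := by
    intro j
    have hj := congrFun h j
    simp only [Pi.smul_apply, smul_eq_mul] at hj
    rw [← hn, ← hm] at hj
    have hg0 : g ≠ 0 := by omega
    have h2 : g * (n * α j) = g * (m * β j) := by
      rw [show g * (n * α j) = g * n * α j by ring, show g * (m * β j) = g * m * β j by ring]
      exact hj
    exact mul_left_cancel₀ hg0 h2
  have hnpos : 0 < n := by nlinarith [hn, hNpos, hgpos]
  have hmpos : 0 < m := by nlinarith [hm, hM, hgpos]
  have hcop : IsCoprime n m := by
    rw [Int.isCoprime_iff_gcd_eq_one]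
    exact Int.gcd_div_gcd_div_gcd hgnat
  have hn1 : n = 1 := by
    have hdvd : ∀ j, n ∣ β j := by
      intro j
      have : n ∣ m * β j := ⟨α j, (hnm j).symm⟩
      exact hcop.dvd_of_dvd_mul_left this
    have := root_primitive D hβ hdvd
    exact Int.eq_one_of_dvd_one (by omega) this
  have hm1 : m = 1 := by
    have hdvd : ∀ j, m ∣ α j := by
      intro j
      have : m ∣ n * α j := ⟨β j, hnm j⟩
      exact hcop.symm.dvd_of_dvd_mul_left this
    have := root_primitive D hα hdvd
    exact Int.eq_one_of_dvd_one (by omega) this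
  funext j
  have := hnm j
  rw [hn1, hm1] at this
  omega

end KLR
namespace KLR

variable {I : Type} [Fintype I] [DecidableEq I] (D : CartanDatum I)

lemma root_sub_root {α β : I → ℤ} (hα : IsRoot D α) (hβ : IsRoot D β)
    (hpos : 0 < bform D α β) (hne : α ≠ β) : IsRoot D (α - β) := by
  obtain ⟨pβ, di, hdi, hββ, hβpair, hβrefl⟩ := reflect_root D hβ
  obtain ⟨pα, dj, hdj, hαα, hαpair, hαrefl⟩ := reflect_root D hα
  set p := pβ α with hp
  set q := pα β with hq
  have hdip : di * p = bform D α β := by rw [← hβpair α, bform_symm]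
  have hdjq : dj * q = bform D α β := (hαpair β).symm
  have hppos : 0 < p := by nlinarith
  have hqpos : 0 < q := by nlinarith
  have hcs : bform D α β ^ 2 ≤ bform D α α * bform D β β := bform_cauchy D α β
  have hstrict : bform D α β ^ 2 < bform D α α * bform D β β := by
    rcases lt_or_eq_of_le hcs with h | h
    · exact h
    · exfalso
      exact hne (root_eq_of_proportional D hα hβ hpos
        (bform_cauchy_eq D (root_ne_zero D hβ) h))
  have hpq : p * q ≤ 3 := by
    have e1 : (di * p) * (dj * q) = bform D α β ^ 2 := by rw [hdip, hdjq]; ring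
    have hchain : (di * dj) * (p * q) < (di * dj) * 4 := by
      calc (di * dj) * (p * q) = (di * p) * (dj * q) := by ring
        _ = bform D α β ^ 2 := e1
        _ < bform D α α * bform D β β := hstrict
        _ = 4 * (di * dj) := by rw [hαα, hββ]; ring
        _ = (di * dj) * 4 := by ring
    have := lt_of_mul_lt_mul_left hchain (by positivity)
    omega
  have h1 : p = 1 ∨ q = 1 := by
    by_contra hcon
    push_neg at hcon
    obtain ⟨h2, h3⟩ := hcon
    have hp2 : 2 ≤ p := by omega
    have hq2 : 2 ≤ q := by omega
    nlinarith
  rcases h1 with h | h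
  · have := hβrefl α hα
    rwa [← hp, h, one_smul] at this
  · have := hαrefl β hβ
    rw [← hq, h, one_smul] at this
    have := isRoot_neg D this
    rwa [neg_sub] at this

lemma pos_entry {v : I → ℤ} (hv : IsPosRoot D v) : ∃ j, 0 < v j := by
  have h0 := root_ne_zero D hv.1
  have : ∃ j, v j ≠ 0 := by
    by_contra h
    push_neg at h
    exact h0 (funext fun j => h j)
  obtain ⟨j, hj⟩ := this
  exact ⟨j, lt_of_le_of_ne (hv.2 j) (Ne.symm hj)⟩

lemma sum_posroot_ne_zero {X : Type} {s : Finset X} (hs : s.Nonempty) {γ : X → I → ℤ}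
    (hγ : ∀ a ∈ s, IsPosRoot D (γ a)) : (∑ a ∈ s, γ a) ≠ 0 := by
  obtain ⟨a0, ha0⟩ := hs
  obtain ⟨j, hj⟩ := pos_entry D (hγ a0 ha0)
  intro h
  have hsum : (∑ a ∈ s, γ a) j = 0 := by rw [h]; rfl
  rw [Finset.sum_apply] at hsum
  have hle : γ a0 j ≤ ∑ a ∈ s, γ a j :=
    Finset.single_le_sum (fun a ha => (hγ a ha).2 j) ha0
  omega

lemma peel {X : Type} {β : I → ℤ} (hβ : IsRoot D β) (s : Finset X) (hcard : 2 ≤ s.card)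
    (γ : X → I → ℤ) (hγ : ∀ a ∈ s, IsPosRoot D (γ a)) (hsum : β = ∑ a ∈ s, γ a) :
    ∃ a ∈ s, IsRoot D (β - γ a) := by
  classical
  have hpos : 0 < bform D β β := root_bform_pos D hβ
  have hsplit : bform D β β = ∑ a ∈ s, bform D β (γ a) := by
    nth_rewrite 2 [hsum]
    exact bform_sum_right D β s γ
  have hex : ∃ a ∈ s, 0 < bform D β (γ a) := by
    by_contra h
    push_neg at h
    have : (∑ a ∈ s, bform D β (γ a)) ≤ 0 := Finset.sum_nonpos h
    omega
  obtain ⟨a, ha, hapos⟩ := hex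
  have herase : β - γ a = ∑ b ∈ s.erase a, γ b := by
    rw [hsum, ← Finset.add_sum_erase s γ ha]
    ring
  have heraseroots : ∀ b ∈ s.erase a, IsPosRoot D (γ b) :=
    fun b hb => hγ b (Finset.mem_of_mem_erase hb)
  have hene : (s.erase a).Nonempty := by
    rw [← Finset.card_pos, Finset.card_erase_of_mem ha]
    omega
  have hne : β ≠ γ a := by
    intro h
    have : β - γ a = 0 := by rw [h]; ring
    rw [herase] at this
    exact sum_posroot_ne_zero D hene heraseroots this
  exact ⟨a, ha, root_sub_root D hβ (hγ a ha).1 hapos hne⟩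

lemma convex_sum {le : (I → ℤ) → (I → ℤ) → Prop} (hconv : IsConvexOrder D le)
    {X : Type} (s : Finset X) (hs : s.Nonempty) (γ : X → I → ℤ)
    (hγ : ∀ a ∈ s, IsPosRoot D (γ a)) {β : I → ℤ} (hβ : IsPosRoot D β)
    (hsum : β = ∑ a ∈ s, γ a) :
    (∃ a ∈ s, le (γ a) β) ∧ (∃ a ∈ s, le β (γ a)) := by
  classical
  induction s using Finset.strongInduction generalizing β with
  | _ s ih =>
    rcases Nat.lt_or_ge s.card 2 with hc | hc
    · -- singleton
      have hc1 : s.card = 1 := by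
        have := Finset.card_pos.mpr hs
        omega
      obtain ⟨a, rfl⟩ := Finset.card_eq_one.mp hc1
      rw [Finset.sum_singleton] at hsum
      subst hsum
      exact ⟨⟨a, Finset.mem_singleton_self a, hconv.refl _ (hγ a (Finset.mem_singleton_self a))⟩,
        ⟨a, Finset.mem_singleton_self a, hconv.refl _ (hγ a (Finset.mem_singleton_self a))⟩⟩
    · obtain ⟨a, ha, haroot⟩ := peel D hβ.1 s hc γ hγ hsum
      set δ := β - γ a with hδ
      have herase : δ = ∑ b ∈ s.erase a, γ b := by
        rw [hδ, hsum, ← Finset.add_sum_erase s γ ha]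
        ring
      have heraseroots : ∀ b ∈ s.erase a, IsPosRoot D (γ b) :=
        fun b hb => hγ b (Finset.mem_of_mem_erase hb)
      have hene : (s.erase a).Nonempty := by
        rw [← Finset.card_pos, Finset.card_erase_of_mem ha]
        omega
      have hδpos : IsPosRoot D δ := by
        refine ⟨haroot, fun j => ?_⟩
        rw [herase, Finset.sum_apply]
        exact Finset.sum_nonneg fun b hb => (heraseroots b hb).2 j
      have haγ : IsPosRoot D (γ a) := hγ a ha
      have hadd : γ a + δ = β := by rw [hδ]; abel
      have hIH := ih (s.erase a) (Finset.erase_ssubset ha) hene heraseroots hδpos herase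
      rcases hconv.total (γ a) δ haγ hδpos with h | h
      · have hcx := hconv.convex (γ a) δ haγ hδpos (by rwa [hadd]) h
        rw [hadd] at hcx
        obtain ⟨b, hb, hble⟩ := hIH.2
        refine ⟨⟨a, ha, hcx.1⟩, ⟨b, Finset.mem_of_mem_erase hb, ?_⟩⟩
        exact hconv.trans _ _ _ hβ hδpos (heraseroots b hb) hcx.2 hble
      · have hcx := hconv.convex δ (γ a) hδpos haγ (by rw [add_comm]; rwa [hadd]) h
        rw [add_comm, hadd] at hcx
        obtain ⟨b, hb, hble⟩ := hIH.1
        refine ⟨⟨b, Finset.mem_of_mem_erase hb, ?_⟩, ⟨a, ha, hcx.2⟩⟩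
        exact hconv.trans _ _ _ (heraseroots b hb) hδpos hβ hble hcx.1

end KLR
namespace KLR

variable {I : Type} [Fintype I] [DecidableEq I] (D : CartanDatum I)

lemma keyA {le : (I → ℤ) → (I → ℤ) → Prop} (hconv : IsConvexOrder D le)
    {m l : ℕ} (mf : Fin m → (I → ℤ)) (lf : Fin l → (I → ℤ))
    (hmroot : ∀ b, IsPosRoot D (mf b)) (hlroot : ∀ a, IsPosRoot D (lf a))
    (hmsort : ∀ b b' : Fin m, b ≤ b' → le (mf b') (mf b))
    (hlsort : ∀ a a' : Fin l, a ≤ a' → le (lf a') (lf a))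
    (A : Fin m → Finset (Fin l)) (hdisj : ∀ b b', b ≠ b' → Disjoint (A b) (A b'))
    (hsum : ∀ b, mf b = ∑ a ∈ A b, lf a)
    (t : ℕ) (h1 : t < m) (h2 : t < l) :
    le (mf ⟨t, h1⟩) (lf ⟨t, h2⟩) := by
  classical
  by_contra hcon
  have hAne : ∀ b, (A b).Nonempty := by
    intro b
    rw [Finset.nonempty_iff_ne_empty]
    intro h
    have := hsum b
    rw [h, Finset.sum_empty] at this
    exact root_ne_zero D (hmroot b).1 this
  -- choose the top witnesses
  have hwit : ∀ b : Fin m, ∃ a ∈ A b, le (mf b) (lf a) := by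
    intro b
    exact (convex_sum D hconv (A b) (hAne b) (fun a => lf a)
      (fun a _ => hlroot a) (hmroot b) (hsum b)).2
  choose w hw1 hw2 using hwit
  have hlt : le (lf ⟨t, h2⟩) (mf ⟨t, h1⟩) := by
    rcases hconv.total (mf ⟨t, h1⟩) (lf ⟨t, h2⟩) (hmroot _) (hlroot _) with h | h
    · exact absurd h hcon
    · exact h
  -- for each k ≤ t, the witness lands strictly below t
  have hwlt : ∀ b : Fin m, b.1 ≤ t → (w b).1 < t := by
    intro b hbt
    by_contra hge
    push_neg at hge
    -- then lf (w b) ⪯ lf ⟨t⟩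
    have hle1 : le (lf (w b)) (lf ⟨t, h2⟩) := hlsort ⟨t, h2⟩ (w b) (by
      rw [Fin.le_def]
      simpa using hge)
    -- chain : le (lf ⟨t⟩) (mf ⟨t⟩) ⪯ mf b ⪯ lf (w b) ⪯ lf ⟨t⟩
    have hle2 : le (mf ⟨t, h1⟩) (mf b) := hmsort b ⟨t, h1⟩ (by
      rw [Fin.le_def]
      simpa using hbt)
    have hle3 : le (lf ⟨t, h2⟩) (mf b) :=
      hconv.trans _ _ _ (hlroot _) (hmroot _) (hmroot _) hlt hle2
    have hle4 : le (lf ⟨t, h2⟩) (lf (w b)) :=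
      hconv.trans _ _ _ (hlroot _) (hmroot _) (hlroot _) hle3 (hw2 b)
    have heq1 : lf (w b) = lf ⟨t, h2⟩ :=
      hconv.antisymm _ _ (hlroot _) (hlroot _) hle1 hle4
    -- then mf b ⪯ lf ⟨t⟩ and lf ⟨t⟩ ⪯ mf b, so mf b = lf ⟨t⟩
    have hle5 : le (mf b) (lf ⟨t, h2⟩) := by
      have := hw2 b
      rwa [heq1] at this
    have heq2 : mf b = lf ⟨t, h2⟩ :=
      hconv.antisymm _ _ (hmroot _) (hlroot _) hle5 hle3
    -- hence le (mf ⟨t⟩) (lf ⟨t⟩), contradiction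
    apply hcon
    rw [← heq2]
    exact hle2
  -- pigeonhole
  have hinj : Function.Injective (fun k : Fin (t + 1) =>
      (⟨(w ⟨k.1, by omega⟩).1, hwlt ⟨k.1, by omega⟩ (by simp; omega)⟩ : Fin t)) := by
    intro k k' h
    simp only [Fin.mk.injEq] at h
    have hww : w ⟨k.1, by omega⟩ = w ⟨k'.1, by omega⟩ := Fin.ext h
    by_contra hkk
    have hbb : (⟨k.1, by omega⟩ : Fin m) ≠ ⟨k'.1, by omega⟩ := by
      intro hc
      apply hkk
      have : k.1 = k'.1 := by
        have := congrArg Fin.val hc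
        simpa using this
      exact Fin.ext this
    have hd := hdisj _ _ hbb
    rw [Finset.disjoint_left] at hd
    exact hd (hw1 ⟨k.1, by omega⟩) (hww ▸ hw1 ⟨k'.1, by omega⟩)
  have := Fintype.card_le_of_injective _ hinj
  simp only [Fintype.card_fin] at this
  omega

end KLR
namespace KLR

variable {I : Type} [Fintype I] [DecidableEq I] (D : CartanDatum I)

lemma sum_fin_lt {M : Type} [AddCommMonoid M] {l m : ℕ} (h : m ≤ l) (g : Fin l → M) :
    ∑ a ∈ Finset.univ.filter (fun a : Fin l => a.1 < m), g a
      = ∑ b : Fin m, g ⟨b.1, lt_of_lt_of_le b.2 h⟩ := by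
  refine Finset.sum_bij' (fun a ha => (⟨a.1, (Finset.mem_filter.mp ha).2⟩ : Fin m))
    (fun b _ => (⟨b.1, lt_of_lt_of_le b.2 h⟩ : Fin l)) ?_ ?_ ?_ ?_ ?_
  · intro a ha
    exact Finset.mem_univ _
  · intro b _
    refine Finset.mem_filter.mpr ⟨Finset.mem_univ _, b.2⟩
  · intro a ha
    rfl
  · intro b hb
    rfl
  · intro a ha
    rfl

lemma sum_fin_rev_ge {M : Type} [AddCommMonoid M] {l m : ℕ} (h : m ≤ l) (g : Fin l → M) :
    ∑ b : Fin m, g (Fin.castLE h b).rev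
      = ∑ a ∈ Finset.univ.filter (fun a : Fin l => l - m ≤ a.1), g a := by
  refine Finset.sum_bij' (fun b _ => ((Fin.castLE h b).rev : Fin l))
    (fun a ha => (⟨l - 1 - a.1, by
      have ha' := (Finset.mem_filter.mp ha).2
      have := a.2
      omega⟩ : Fin m)) ?_ ?_ ?_ ?_ ?_
  · intro b _
    refine Finset.mem_filter.mpr ⟨Finset.mem_univ _, ?_⟩
    have := b.2
    simp only [Fin.val_rev, Fin.coe_castLE]
    omega
  · intro a ha
    exact Finset.mem_univ _
  · intro b _
    apply Fin.ext
    have := b.2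
    simp only [Fin.val_rev, Fin.coe_castLE]
    omega
  · intro a ha
    apply Fin.ext
    have ha' := (Finset.mem_filter.mp ha).2
    have := a.2
    simp only [Fin.val_rev, Fin.coe_castLE]
    omega
  · intro b _
    rfl

end KLR

theorem stmt_8 {I : Type} [Fintype I] [DecidableEq I] (D : CartanDatum I)
    (le : (I → ℤ) → (I → ℤ) → Prop) (hconv : IsConvexOrder D le)
    (α : I → ℕ) (lam mu : List (I → ℤ))
    (hlam : IsKP D le α lam) (hmu : IsKP D le α mu)
    (A : Fin mu.length → Finset (Fin lam.length))
    (hdisj : ∀ b b', b ≠ b' → Disjoint (A b) (A b'))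
    (hcover : ∀ a : Fin lam.length, ∃ b, a ∈ A b)
    (hne : ∀ b, (A b).Nonempty)
    (hsum : ∀ b : Fin mu.length, mu.get b = ∑ a ∈ A b, lam.get a) :
    mu = lam ∨ BilexLt le mu lam := by
  classical
  by_cases heq : mu = lam
  · exact Or.inl heq
  right
  obtain ⟨hmu1, hmu2, hmu3⟩ := hmu
  obtain ⟨hlam1, hlam2, hlam3⟩ := hlam
  have hmuroot : ∀ b : Fin mu.length, IsPosRoot D (mu.get b) :=
    fun b => hmu1 _ (mu.get_mem b)
  have hlamroot : ∀ a : Fin lam.length, IsPosRoot D (lam.get a) :=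
    fun a => hlam1 _ (lam.get_mem a)
  have hmusort : ∀ b b' : Fin mu.length, b ≤ b' → le (mu.get b') (mu.get b) := by
    intro b b' hbb
    rcases eq_or_lt_of_le hbb with h | h
    · have : b = b' := Fin.ext (by exact_mod_cast congrArg Fin.val h)
      subst this
      exact hconv.refl _ (hmuroot b)
    · exact (List.pairwise_iff_get.mp hmu2) b b' h
  have hlamsort : ∀ a a' : Fin lam.length, a ≤ a' → le (lam.get a') (lam.get a) := by
    intro a a' haa
    rcases eq_or_lt_of_le haa with h | h
    · have : a = a' := Fin.ext (by exact_mod_cast congrArg Fin.val h)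
      subst this
      exact hconv.refl _ (hlamroot a)
    · exact (List.pairwise_iff_get.mp hlam2) a a' h
  -- the classifier
  choose f hf using hcover
  have hfiber : ∀ (b) (a), a ∈ A b ↔ f a = b := by
    intro b a
    constructor
    · intro ha
      by_contra hne'
      exact (Finset.disjoint_left.mp (hdisj (f a) b hne')) (hf a) ha
    · rintro rfl
      exact hf a
  have hml : mu.length ≤ lam.length := by
    have hsurj : Function.Surjective f := by
      intro b
      obtain ⟨a, ha⟩ := hne b
      exact ⟨a, (hfiber b a).mp ha⟩
    have := Fintype.card_le_of_surjective f hsurj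
    simpa using this
  have Hsum : ∑ b : Fin mu.length, mu.get b = ∑ a : Fin lam.length, lam.get a := by
    have hA : ∀ b, A b = Finset.univ.filter (fun a => f a = b) := by
      intro b
      ext a
      simp only [Finset.mem_filter, Finset.mem_univ, true_and]
      exact hfiber b a
    calc ∑ b : Fin mu.length, mu.get b
        = ∑ b : Fin mu.length, ∑ a ∈ Finset.univ.filter (fun a => f a = b), lam.get a := by
          refine Finset.sum_congr rfl fun b _ => ?_
          rw [hsum b, hA b]
      _ = ∑ a : Fin lam.length, lam.get a := Finset.sum_fiberwise _ _ _
  have hsum_pos_ne : ∀ (s : Finset (Fin lam.length)), s.Nonempty →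
      (∑ a ∈ s, lam.get a) ≠ 0 :=
    fun s hs => sum_posroot_ne_zero D hs (fun a _ => hlamroot a)
  have hm0 : 0 < mu.length := by
    rcases Nat.eq_zero_or_pos mu.length with h0 | h
    · exfalso
      rcases Nat.eq_zero_or_pos lam.length with hl0 | hl0
      · exact heq (by rw [List.length_eq_zero_iff.mp h0, List.length_eq_zero_iff.mp hl0])
      · refine hsum_pos_ne Finset.univ ⟨⟨0, hl0⟩, Finset.mem_univ _⟩ ?_
        rw [← Hsum]
        exact Finset.sum_eq_zero fun b _ => absurd b.2 (by omega)
    · exact h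
  have hl0 : 0 < lam.length := lt_of_lt_of_le hm0 hml
  have keyLow : ∀ (t : ℕ) (h1 : t < mu.length) (h2 : t < lam.length),
      le (mu.get ⟨t, h1⟩) (lam.get ⟨t, h2⟩) :=
    fun t h1 h2 =>
      keyA D hconv mu.get lam.get hmuroot hlamroot hmusort hlamsort A hdisj hsum t h1 h2
  have hconv' : IsConvexOrder D (fun x y => le y x) := by
    constructor
    · exact fun v hv => hconv.refl v hv
    · exact fun u v w hu hv hw h1 h2 => hconv.trans w v u hw hv hu h2 h1
    · exact fun u v hu hv h1 h2 => hconv.antisymm u v hu hv h2 h1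
    · exact fun u v hu hv => (hconv.total u v hu hv).symm
    · intro γ β hγ hβ hγβ h
      have h2 := hconv.convex β γ hβ hγ (by rwa [add_comm] at hγβ) h
      constructor
      · rw [add_comm]
        exact h2.2
      · rw [add_comm]
        exact h2.1
  have keyHigh : ∀ (u : ℕ) (h1 : u < mu.length) (h2 : u < lam.length),
      le (lam.get (⟨u, h2⟩ : Fin lam.length).rev) (mu.get (⟨u, h1⟩ : Fin mu.length).rev) := by
    intro u h1 h2
    refine keyA D hconv' (fun b => mu.get b.rev) (fun a => lam.get a.rev)
      (fun b => hmuroot _) (fun a => hlamroot _) ?_ ?_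
      (fun b => (A b.rev).image Fin.rev) ?_ ?_ u h1 h2
    · intro b b' hbb
      exact hmusort b'.rev b.rev (Fin.rev_le_rev.mpr hbb)
    · intro a a' haa
      exact hlamsort a'.rev a.rev (Fin.rev_le_rev.mpr haa)
    · intro b b' hbb
      refine (Finset.disjoint_image Fin.rev_injective).mpr ?_
      exact hdisj b.rev b'.rev (fun hc => hbb (Fin.rev_injective hc))
    · intro b
      show mu.get b.rev = ∑ a ∈ (A b.rev).image Fin.rev, lam.get a.rev
      rw [hsum b.rev, Finset.sum_image (fun x _ y _ hxy => Fin.rev_injective hxy)]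
      simp [Fin.rev_rev]
  -- ####### first lexicographic component #######
  have hTex : ∃ t : Fin mu.length, mu.get t ≠ lam.get ⟨t.1, lt_of_lt_of_le t.2 hml⟩ := by
    by_contra hcon
    push_neg at hcon
    rcases eq_or_lt_of_le hml with hl | hl
    · refine heq (List.ext_get hl fun n h1 h2 => ?_)
      exact hcon ⟨n, h1⟩
    · have h1 : ∑ b : Fin mu.length, mu.get b
          = ∑ a ∈ Finset.univ.filter (fun a : Fin lam.length => a.1 < mu.length), lam.get a := by
        rw [sum_fin_lt hml]
        exact Finset.sum_congr rfl fun b _ => hcon b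
      have h2 := Finset.sum_filter_add_sum_filter_not Finset.univ
        (fun a : Fin lam.length => a.1 < mu.length) lam.get
      rw [← Hsum, ← h1] at h2
      have h3 : ∑ a ∈ Finset.univ.filter
          (fun a : Fin lam.length => ¬ a.1 < mu.length), lam.get a = 0 := by
        have := h2
        nth_rewrite 2 [show (∑ b : Fin mu.length, mu.get b)
          = ∑ b : Fin mu.length, mu.get b + 0 by rw [add_zero]] at this
        exact add_left_cancel this
      refine hsum_pos_ne _ ⟨⟨mu.length, hl⟩, ?_⟩ h3
      refine Finset.mem_filter.mpr ⟨Finset.mem_univ _, by simp⟩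
  set T : Finset (Fin mu.length) := Finset.univ.filter
    (fun t : Fin mu.length => mu.get t ≠ lam.get ⟨t.1, lt_of_lt_of_le t.2 hml⟩) with hTdef
  have hTne2 : T.Nonempty := by
    obtain ⟨t, ht⟩ := hTex
    exact ⟨t, Finset.mem_filter.mpr ⟨Finset.mem_univ _, ht⟩⟩
  set t0 := T.min' hTne2 with ht0def
  have ht0mem : mu.get t0 ≠ lam.get ⟨t0.1, lt_of_lt_of_le t0.2 hml⟩ :=
    (Finset.mem_filter.mp (T.min'_mem hTne2)).2
  have ht0min : ∀ s : Fin mu.length, s.1 < t0.1 →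
      mu.get s = lam.get ⟨s.1, lt_of_lt_of_le s.2 hml⟩ := by
    intro s hs
    by_contra hne'
    have hmem : s ∈ T := Finset.mem_filter.mpr ⟨Finset.mem_univ _, hne'⟩
    have := T.min'_le s hmem
    rw [Fin.le_def] at this
    omega
  -- ####### second lexicographic component #######
  have hUex : ∃ u : Fin mu.length,
      mu.get u.rev ≠ lam.get (Fin.castLE hml u).rev := by
    by_contra hcon
    push_neg at hcon
    rcases eq_or_lt_of_le hml with hl | hl
    · refine heq (List.ext_get hl fun n h1 h2 => ?_)
      have := hcon (⟨n, h1⟩ : Fin mu.length).rev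
      rw [Fin.rev_rev] at this
      have hidx : ((Fin.castLE hml (⟨n, h1⟩ : Fin mu.length).rev).rev : Fin lam.length)
          = ⟨n, h2⟩ := by
        apply Fin.ext
        simp only [Fin.val_rev, Fin.coe_castLE]
        omega
      rw [hidx] at this
      exact this
    · have h1 : ∑ b : Fin mu.length, mu.get b
          = ∑ a ∈ Finset.univ.filter
              (fun a : Fin lam.length => lam.length - mu.length ≤ a.1), lam.get a := by
        rw [← sum_fin_rev_ge hml]
        rw [show (∑ b : Fin mu.length, mu.get b)
            = ∑ b : Fin mu.length, mu.get b.rev from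
          (Equiv.sum_comp Fin.revPerm (fun b : Fin mu.length => mu.get b)).symm]
        exact Finset.sum_congr rfl fun b _ => hcon b
      have h2 := Finset.sum_filter_add_sum_filter_not Finset.univ
        (fun a : Fin lam.length => lam.length - mu.length ≤ a.1) lam.get
      rw [← Hsum, ← h1] at h2
      have h3 : ∑ a ∈ Finset.univ.filter
          (fun a : Fin lam.length => ¬ lam.length - mu.length ≤ a.1), lam.get a = 0 := by
        have := h2
        nth_rewrite 2 [show (∑ b : Fin mu.length, mu.get b)
          = ∑ b : Fin mu.length, mu.get b + 0 by rw [add_zero]] at this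
        exact add_left_cancel this
      refine hsum_pos_ne _ ⟨⟨0, hl0⟩, ?_⟩ h3
      refine Finset.mem_filter.mpr ⟨Finset.mem_univ _, by simp; omega⟩
  set U : Finset (Fin mu.length) := Finset.univ.filter
    (fun u : Fin mu.length => mu.get u.rev ≠ lam.get (Fin.castLE hml u).rev) with hUdef
  have hUne2 : U.Nonempty := by
    obtain ⟨u, hu⟩ := hUex
    exact ⟨u, Finset.mem_filter.mpr ⟨Finset.mem_univ _, hu⟩⟩
  set u0 := U.min' hUne2 with hu0def
  have hu0mem : mu.get u0.rev ≠ lam.get (Fin.castLE hml u0).rev :=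
    (Finset.mem_filter.mp (U.min'_mem hUne2)).2
  have hu0min : ∀ s : Fin mu.length, s.1 < u0.1 →
      mu.get s.rev = lam.get (Fin.castLE hml s).rev := by
    intro s hs
    by_contra hne'
    have hmem : s ∈ U := Finset.mem_filter.mpr ⟨Finset.mem_univ _, hne'⟩
    have := U.min'_le s hmem
    rw [Fin.le_def] at this
    omega
  constructor
  -- ======== LexLt mu lam ========
  · refine ⟨t0.1, t0.2, lt_of_lt_of_le t0.2 hml, ?_, ?_, ?_⟩
    · -- take equality
      apply List.ext_get
      · rw [List.length_take, List.length_take]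
        omega
      · intro n h1 h2
        have hn : n < t0.1 := by
          rw [List.length_take] at h1
          omega
        have h1' : n < mu.length := by omega
        have h2' : n < lam.length := by omega
        rw [List.get_eq_getElem, List.get_eq_getElem, List.getElem_take, List.getElem_take]
        exact ht0min ⟨n, h1'⟩ hn
    · exact keyLow t0.1 t0.2 (lt_of_lt_of_le t0.2 hml)
    · exact ht0mem
  -- ======== LexLt on reverses ========
  · have hrl : u0.1 < mu.reverse.length := by
      rw [List.length_reverse]
      exact u0.2
    have hrl2 : u0.1 < lam.reverse.length := by
      rw [List.length_reverse]
      omega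
    refine ⟨u0.1, hrl, hrl2, ?_, ?_, ?_⟩
    · -- take equality on reverses
      apply List.ext_get
      · rw [List.length_take, List.length_take, List.length_reverse, List.length_reverse]
        omega
      · intro n h1 h2
        have hn : n < u0.1 := by
          rw [List.length_take] at h1
          omega
        have h1' : n < mu.length := by omega
        have h2' : n < lam.length := by omega
        rw [List.get_eq_getElem, List.get_eq_getElem, List.getElem_take, List.getElem_take,
          List.getElem_reverse, List.getElem_reverse]
        have := hu0min ⟨n, h1'⟩ hn
        rw [List.get_eq_getElem, List.get_eq_getElem] at this
        convert this using 2
        · simp only [Fin.val_rev]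
          omega
        · simp only [Fin.val_rev, Fin.coe_castLE]
          omega
    · -- the strict inequality
      have hk := keyHigh u0.1 u0.2 (lt_of_lt_of_le u0.2 hml)
      rw [List.get_eq_getElem, List.get_eq_getElem, List.getElem_reverse, List.getElem_reverse]
      rw [List.get_eq_getElem, List.get_eq_getElem] at hk
      convert hk using 2
      · simp only [Fin.val_rev, Fin.coe_castLE]
        omega
      · simp only [Fin.val_rev]
        omega
    · -- inequality of the entries
      have := hu0mem
      rw [List.get_eq_getElem, List.get_eq_getElem] at this
      intro hc
      apply this
      rw [List.get_eq_getElem, List.get_eq_getElem, List.getElem_reverse, List.getElem_reverse] at hc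
      convert hc using 2
      · simp only [Fin.val_rev]
        omega
      · simp only [Fin.val_rev, Fin.coe_castLE]
        omega
end

section
/- Let β ∈ Φ⁺ and suppose β = γ_1 + ⋯ + γ_s with all γ_t ∈ Φ⁺. Then min{γ_1, …, γ_s} ⪯ β ⪯ max{γ_1, …, γ_s}, where min and max are taken with respect to the convex order ⪯. -/
open scoped BigOperators

open KLR

/-!
STATEMENT 9: if `β ∈ Φ⁺` and `β = γ_1 + ⋯ + γ_s` with all `γ_t ∈ Φ⁺`, then
`min{γ_1,…,γ_s} ⪯ β ⪯ max{γ_1,…,γ_s}` in the convex order `⪯`; equivalently (by totality),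
some `γ_t` satisfies `γ_t ⪯ β` and some `γ_{t'}` satisfies `β ⪯ γ_{t'}`. -/
namespace KLRProof

open KLR

variable {I : Type} [Fintype I] [DecidableEq I]

/-- The symmetrized bilinear form. -/
def Bf (D : CartanDatum I) (u v : I → ℤ) : ℤ := ∑ i, ∑ j, u i * (D.d i * D.c i j) * v j

/-- The pairing `⟨α_i^∨, v⟩`. -/
def Kf (D : CartanDatum I) (i : I) (v : I → ℤ) : ℤ := ∑ t, D.c i t * v t

lemma Bf_symm (D : CartanDatum I) (u v : I → ℤ) : Bf D u v = Bf D v u := by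
  unfold Bf
  rw [Finset.sum_comm]
  refine Finset.sum_congr rfl fun j _ => Finset.sum_congr rfl fun i _ => ?_
  rw [D.symm i j]; ring

lemma Bf_zero_left (D : CartanDatum I) (v : I → ℤ) : Bf D 0 v = 0 := by
  simp [Bf]

lemma Bf_add_left (D : CartanDatum I) (u w v : I → ℤ) :
    Bf D (u + w) v = Bf D u v + Bf D w v := by
  simp [Bf, add_mul, Finset.sum_add_distrib]

lemma Bf_sub_left (D : CartanDatum I) (u w v : I → ℤ) :
    Bf D (u - w) v = Bf D u v - Bf D w v := by
  simp [Bf, sub_mul, Finset.sum_sub_distrib]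

lemma Bf_smul_left (D : CartanDatum I) (k : ℤ) (u v : I → ℤ) :
    Bf D (k • u) v = k * Bf D u v := by
  simp [Bf, Finset.mul_sum]
  refine Finset.sum_congr rfl fun i _ => Finset.sum_congr rfl fun j _ => ?_
  ring

lemma Bf_sub_right (D : CartanDatum I) (u w v : I → ℤ) :
    Bf D v (u - w) = Bf D v u - Bf D v w := by
  rw [Bf_symm, Bf_sub_left, Bf_symm D u v, Bf_symm D w v]

lemma Bf_smul_right (D : CartanDatum I) (k : ℤ) (u v : I → ℤ) :
    Bf D v (k • u) = k * Bf D v u := by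
  rw [Bf_symm, Bf_smul_left, Bf_symm]

lemma Bf_simple_right (D : CartanDatum I) (u : I → ℤ) (i : I) :
    Bf D u (simple i) = D.d i * Kf D i u := by
  unfold Bf Kf simple
  rw [Finset.mul_sum]
  refine Finset.sum_congr rfl fun a _ => ?_
  rw [Finset.sum_eq_single i]
  · rw [D.symm a i, if_pos rfl]; ring
  · intro b _ hb; simp [hb]
  · intro h; exact absurd (Finset.mem_univ i) h

lemma Bf_simple_left (D : CartanDatum I) (u : I → ℤ) (i : I) :
    Bf D (simple i) u = D.d i * Kf D i u := by
  rw [Bf_symm, Bf_simple_right]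

lemma Kf_simple (D : CartanDatum I) (i : I) : Kf D i (simple i) = 2 := by
  unfold Kf simple
  rw [Finset.sum_eq_single i]
  · simp [D.c_diag]
  · intro b _ hb; simp [hb]
  · intro h; exact absurd (Finset.mem_univ i) h

lemma srefl_eq (D : CartanDatum I) (i : I) (v : I → ℤ) :
    srefl D i v = v - (Kf D i v) • simple i := by
  funext j
  by_cases h : j = i <;> simp [srefl, simple, Kf, h]

lemma Kf_sub (D : CartanDatum I) (i : I) (u v : I → ℤ) :
    Kf D i (u - v) = Kf D i u - Kf D i v := by
  simp [Kf, mul_sub, Finset.sum_sub_distrib]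

lemma Kf_smul (D : CartanDatum I) (i : I) (k : ℤ) (v : I → ℤ) :
    Kf D i (k • v) = k * Kf D i v := by
  simp [Kf, Finset.mul_sum]
  refine Finset.sum_congr rfl fun t _ => ?_
  ring

lemma srefl_sub_smul (D : CartanDatum I) (i : I) (u v : I → ℤ) (k : ℤ) :
    srefl D i (u - k • v) = srefl D i u - k • srefl D i v := by
  rw [srefl_eq, srefl_eq, srefl_eq, Kf_sub, Kf_smul]
  funext j
  by_cases h : j = i <;> simp [simple, h] <;> ring

lemma Bf_srefl (D : CartanDatum I) (i : I) (u v : I → ℤ) :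
    Bf D (srefl D i u) (srefl D i v) = Bf D u v := by
  simp only [srefl_eq, Bf_sub_left, Bf_sub_right, Bf_smul_left, Bf_smul_right,
    Bf_simple_left, Bf_simple_right, Kf_sub, Kf_smul, Kf_simple]
  ring

lemma srefl_srefl (D : CartanDatum I) (i : I) (v : I → ℤ) :
    srefl D i (srefl D i v) = v := by
  have h : Kf D i (srefl D i v) = - Kf D i v := by
    rw [srefl_eq, Kf_sub, Kf_smul, Kf_simple]; ring
  rw [srefl_eq D i (srefl D i v), h, srefl_eq]
  funext j; by_cases hj : j = i <;> simp [simple, hj] <;> ring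

end KLRProof
namespace KLRProof

open KLR

variable {I : Type} [Fintype I] [DecidableEq I]

/-- Weyl word action. -/
def Wf (D : CartanDatum I) (L : List I) (v : I → ℤ) : I → ℤ := L.foldr (srefl D) v

/-- Inverse Weyl word action. -/
def WfInv (D : CartanDatum I) (L : List I) (v : I → ℤ) : I → ℤ :=
  L.foldl (fun x i => srefl D i x) v

lemma Wf_cons (D : CartanDatum I) (i : I) (L : List I) (v : I → ℤ) :
    Wf D (i :: L) v = srefl D i (Wf D L v) := rfl

lemma WfInv_cons (D : CartanDatum I) (i : I) (L : List I) (v : I → ℤ) :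
    WfInv D (i :: L) v = WfInv D L (srefl D i v) := rfl

lemma WfInv_Wf (D : CartanDatum I) (L : List I) (v : I → ℤ) :
    WfInv D L (Wf D L v) = v := by
  induction L generalizing v with
  | nil => rfl
  | cons i L ih => rw [Wf_cons, WfInv_cons, srefl_srefl, ih]

lemma Wf_WfInv (D : CartanDatum I) (L : List I) (v : I → ℤ) :
    Wf D L (WfInv D L v) = v := by
  induction L generalizing v with
  | nil => rfl
  | cons i L ih => rw [Wf_cons, WfInv_cons, ih, srefl_srefl]

lemma Bf_Wf (D : CartanDatum I) (L : List I) (u v : I → ℤ) :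
    Bf D (Wf D L u) (Wf D L v) = Bf D u v := by
  induction L with
  | nil => rfl
  | cons i L ih => rw [Wf_cons, Wf_cons, Bf_srefl, ih]

lemma Wf_sub_smul (D : CartanDatum I) (L : List I) (u v : I → ℤ) (k : ℤ) :
    Wf D L (u - k • v) = Wf D L u - k • Wf D L v := by
  induction L with
  | nil => rfl
  | cons i L ih => rw [Wf_cons, ih, srefl_sub_smul, Wf_cons, Wf_cons]

lemma isRoot_Wf (D : CartanDatum I) (L : List I) {v : I → ℤ} (hv : IsRoot D v) :
    IsRoot D (Wf D L v) := by
  obtain ⟨L', i, rfl⟩ := hv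
  exact ⟨L ++ L', i, by simp [Wf, List.foldr_append]⟩

lemma isRoot_srefl (D : CartanDatum I) (i : I) {v : I → ℤ} (hv : IsRoot D v) :
    IsRoot D (srefl D i v) := isRoot_Wf D [i] hv

lemma isRoot_WfInv (D : CartanDatum I) (L : List I) {v : I → ℤ} (hv : IsRoot D v) :
    IsRoot D (WfInv D L v) := by
  induction L generalizing v with
  | nil => exact hv
  | cons i L ih => exact ih (isRoot_srefl D i hv)

lemma Bf_self_pos_of_ne (D : CartanDatum I) {v : I → ℤ} (hv : v ≠ 0) :
    0 < Bf D v v := by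
  have hq : (fun i => (v i : ℚ)) ≠ 0 := by
    intro h
    apply hv
    funext i
    have h2 := congrFun h i
    simp only [Pi.zero_apply] at h2 ⊢
    exact_mod_cast h2
  have := D.finiteType (fun i => (v i : ℚ)) hq
  have hcast : ((Bf D v v : ℤ) : ℚ) = ∑ i, ∑ j, (v i : ℚ) * ((D.d i * D.c i j : ℤ) : ℚ) * (v j : ℚ) := by
    unfold Bf
    push_cast
    ring
  have : (0 : ℚ) < ((Bf D v v : ℤ) : ℚ) := by rw [hcast]; exact this
  exact_mod_cast this

lemma Bf_self_nonneg (D : CartanDatum I) (v : I → ℤ) : 0 ≤ Bf D v v := by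
  by_cases h : v = 0
  · subst h; rw [Bf_zero_left]
  · exact le_of_lt (Bf_self_pos_of_ne D h)

lemma isRoot_Bf_self_pos (D : CartanDatum I) {v : I → ℤ} (hv : IsRoot D v) :
    0 < Bf D v v := by
  obtain ⟨L, i, rfl⟩ := hv
  have : Bf D (Wf D L (simple i)) (Wf D L (simple i)) = 2 * D.d i := by
    rw [Bf_Wf, Bf_simple_left, Kf_simple]; ring
  rw [Wf] at this
  rw [this]
  have := D.d_pos i
  omega

lemma isRoot_ne_zero (D : CartanDatum I) {v : I → ℤ} (hv : IsRoot D v) : v ≠ 0 := by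
  intro h
  have := isRoot_Bf_self_pos D hv
  rw [h, Bf_zero_left] at this
  exact lt_irrefl 0 this

/-- Reflection in an arbitrary root. -/
lemma refl_root (D : CartanDatum I) {v u : I → ℤ} (hv : IsRoot D v) (hu : IsRoot D u) :
    ∃ k : ℤ, k * Bf D v v = 2 * Bf D v u ∧ IsRoot D (u - k • v) := by
  obtain ⟨L, i, rfl⟩ := hv
  set w : I → ℤ := L.foldr (srefl D) (simple i) with hw
  have hwW : w = Wf D L (simple i) := rfl
  set u' : I → ℤ := WfInv D L u with hu'
  refine ⟨Kf D i u', ?_, ?_⟩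
  · have h1 : Bf D w w = 2 * D.d i := by
      rw [hwW, Bf_Wf, Bf_simple_left, Kf_simple]; ring
    have h2 : Bf D w u = D.d i * Kf D i u' := by
      have : Bf D w u = Bf D w (Wf D L u') := by rw [hu', Wf_WfInv]
      rw [this, hwW, Bf_Wf, Bf_simple_left]
    rw [h1, h2]; ring
  · have : u - Kf D i u' • w = Wf D L (u' - Kf D i u' • simple i) := by
      rw [Wf_sub_smul, hu', Wf_WfInv, hwW]
    rw [this, ← srefl_eq]
    exact isRoot_Wf D L (isRoot_srefl D i (isRoot_WfInv D L hu))

lemma isRoot_neg (D : CartanDatum I) {v : I → ℤ} (hv : IsRoot D v) : IsRoot D (-v) := by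
  obtain ⟨k, hk, hroot⟩ := refl_root D hv hv
  have hpos := isRoot_Bf_self_pos D hv
  have hk2 : k = 2 := by
    have : (k - 2) * Bf D v v = 0 := by linarith
    rcases mul_eq_zero.1 this with h | h
    · omega
    · omega
  rw [hk2] at hroot
  have : v - (2 : ℤ) • v = -v := by funext j; simp; ring
  rwa [this] at hroot

end KLRProof
namespace KLRProof

open KLR

variable {I : Type} [Fintype I] [DecidableEq I]

/-- If `u, v` are roots with `(v,u) > 0` and `u ≠ v`, then `u - v` is a root. -/
lemma sub_root (D : CartanDatum I) {v u : I → ℤ} (hv : IsRoot D v) (hu : IsRoot D u)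
    (hB : 0 < Bf D v u) (hne : v ≠ u) : IsRoot D (u - v) := by
  obtain ⟨k, hk, hkroot⟩ := refl_root D hv hu
  obtain ⟨q, hq, hqroot⟩ := refl_root D hu hv
  have hBvv : 0 < Bf D v v := isRoot_Bf_self_pos D hv
  have hBuu : 0 < Bf D u u := isRoot_Bf_self_pos D hu
  have hsymm : Bf D u v = Bf D v u := Bf_symm D u v
  rw [hsymm] at hq
  set p := Bf D v u with hp
  have hk1 : 1 ≤ k := by nlinarith
  have hq1 : 1 ≤ q := by nlinarith
  by_cases hke : k = 1
  · rw [hke] at hkroot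
    have : u - (1 : ℤ) • v = u - v := by funext j; simp
    rwa [this] at hkroot
  by_cases hqe : q = 1
  · rw [hqe] at hqroot
    have h1 : v - (1 : ℤ) • u = v - u := by funext j; simp
    rw [h1] at hqroot
    have h2 := isRoot_neg D hqroot
    rwa [neg_sub] at h2
  -- now k ≥ 2 and q ≥ 2 : derive a contradiction
  exfalso
  have hk2 : 2 ≤ k := by omega
  have hq2 : 2 ≤ q := by omega
  set x : I → ℤ := Bf D u u • v - p • u with hx
  have hBxx : Bf D x x = Bf D u u * (Bf D u u * Bf D v v - p * p) := by
    rw [hx]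
    simp only [Bf_sub_left, Bf_sub_right, Bf_smul_left, Bf_smul_right]
    rw [hsymm]
    ring
  have hxnonneg : 0 ≤ Bf D x x := Bf_self_nonneg D x
  have hCS : p * p ≤ Bf D u u * Bf D v v := by nlinarith
  have hkq : k * q * (Bf D v v * Bf D u u) = 4 * (p * p) := by
    linear_combination (q * Bf D u u) * hk + (2 * p) * hq
  have hkq4 : (4 : ℤ) ≤ k * q := by
    nlinarith [mul_nonneg (by omega : (0:ℤ) ≤ k - 2) (by omega : (0:ℤ) ≤ q - 2)]
  have h4le : 4 * (Bf D v v * Bf D u u) ≤ k * q * (Bf D v v * Bf D u u) :=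
    mul_le_mul_of_nonneg_right hkq4 (le_of_lt (mul_pos hBvv hBuu))
  have heq : p * p = Bf D u u * Bf D v v := by
    have hcomm : Bf D v v * Bf D u u = Bf D u u * Bf D v v := mul_comm _ _
    linarith
  have hmul0 : (k * q - 4) * (Bf D v v * Bf D u u) = 0 := by
    linear_combination hkq + 4 * heq
  have hmul : k * q = 4 := by
    rcases mul_eq_zero.1 hmul0 with h | h
    · omega
    · exact absurd h (ne_of_gt (mul_pos hBvv hBuu))
  have hkk : k = 2 := by
    have h1 : k * 2 ≤ k * q := mul_le_mul_of_nonneg_left hq2 (by omega)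
    linarith
  have hqq : q = 2 := by
    have h1 : q * 2 ≤ q * k := mul_le_mul_of_nonneg_left hk2 (by omega)
    have h2 : q * k = 4 := by rw [mul_comm]; exact hmul
    linarith
  have hpBvv : p = Bf D v v := by rw [hkk] at hk; omega
  have hpBuu : p = Bf D u u := by rw [hqq] at hq; omega
  have hx0 : x = 0 := by
    by_contra h
    have hpos := Bf_self_pos_of_ne D h
    have hz : Bf D u u * (Bf D u u * Bf D v v - p * p) = 0 := by
      rw [← heq]; ring
    rw [hBxx] at hpos
    linarith
  apply hne
  funext j
  have hj := congrFun hx0 j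
  simp only [hx, Pi.sub_apply, Pi.smul_apply, smul_eq_mul, Pi.zero_apply, ← hpBuu] at hj
  nlinarith [hj]

lemma list_sum_apply (L : List (I → ℤ)) (j : I) :
    L.sum j = (L.map (fun f => f j)).sum := by
  induction L with
  | nil => rfl
  | cons f L ih => simp [List.sum_cons, ih]

lemma list_sum_Bf (D : CartanDatum I) (L : List (I → ℤ)) (β : I → ℤ) :
    Bf D L.sum β = (L.map (fun v => Bf D v β)).sum := by
  induction L with
  | nil => simp [Bf_zero_left]
  | cons f L ih => rw [List.sum_cons, Bf_add_left, List.map_cons, List.sum_cons, ih]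

lemma list_sum_nonpos (L : List ℤ) (h : ∀ x ∈ L, x ≤ 0) : L.sum ≤ 0 := by
  induction L with
  | nil => simp
  | cons a L ih =>
    rw [List.sum_cons]
    have := h a (List.mem_cons_self)
    have := ih (fun x hx => h x (List.mem_cons_of_mem a hx))
    omega

lemma list_sum_nonneg (L : List ℤ) (h : ∀ x ∈ L, 0 ≤ x) : 0 ≤ L.sum := by
  induction L with
  | nil => simp
  | cons a L ih =>
    rw [List.sum_cons]
    have := h a (List.mem_cons_self)
    have := ih (fun x hx => h x (List.mem_cons_of_mem a hx))
    omega

lemma main_lemma (D : CartanDatum I) (le : (I → ℤ) → (I → ℤ) → Prop)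
    (hconv : IsConvexOrder D le) :
    ∀ (n : ℕ) (L : List (I → ℤ)) (β : I → ℤ), L.length = n →
      (∀ v ∈ L, IsPosRoot D v) → IsPosRoot D β → β = L.sum →
      (∃ v ∈ L, le v β) ∧ (∃ v ∈ L, le β v) := by
  intro n
  induction n using Nat.strong_induction_on with
  | _ n IH =>
  intro L β hlen hL hβ hsum
  have hBββ : 0 < Bf D β β := isRoot_Bf_self_pos D hβ.1
  have hsumB : Bf D β β = (L.map (fun v => Bf D v β)).sum := by
    nth_rewrite 1 [hsum]
    exact list_sum_Bf D L β
  have hex : ∃ v ∈ L, 0 < Bf D v β := by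
    by_contra h
    push_neg at h
    have : (L.map (fun v => Bf D v β)).sum ≤ 0 := by
      apply list_sum_nonpos
      intro x hx
      obtain ⟨f, hf, rfl⟩ := List.mem_map.1 hx
      exact h f hf
    omega
  obtain ⟨v, hvL, hvB⟩ := hex
  by_cases hveq : v = β
  · subst hveq
    exact ⟨⟨v, hvL, hconv.refl v hβ⟩, ⟨v, hvL, hconv.refl v hβ⟩⟩
  · set δ : I → ℤ := β - v with hδdef
    have hδroot : IsRoot D δ := sub_root D (hL v hvL).1 hβ.1 hvB hveq
    have hperm : L.sum = v + (L.erase v).sum := by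
      rw [(List.perm_cons_erase hvL).sum_eq, List.sum_cons]
    have hδsum : δ = (L.erase v).sum := by
      rw [hδdef, hsum, hperm]
      abel
    have hδpos : ∀ j, 0 ≤ δ j := by
      intro j
      rw [hδsum, list_sum_apply]
      apply list_sum_nonneg
      intro x hx
      obtain ⟨f, hf, rfl⟩ := List.mem_map.1 hx
      exact (hL f (List.mem_of_mem_erase hf)).2 j
    have hδ : IsPosRoot D δ := ⟨hδroot, hδpos⟩
    have hβeq : v + δ = β := by rw [hδdef]; abel
    have hlenerase : (L.erase v).length < n := by
      rw [List.length_erase_of_mem hvL]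
      have : 0 < L.length := List.length_pos_iff.2 (List.ne_nil_of_mem hvL)
      omega
    obtain ⟨⟨v₁, hv₁, h1⟩, ⟨v₂, hv₂, h2⟩⟩ :=
      IH _ hlenerase (L.erase v) δ rfl
        (fun x hx => hL x (List.mem_of_mem_erase hx)) hδ hδsum
    have hv₁L : v₁ ∈ L := List.mem_of_mem_erase hv₁
    have hv₂L : v₂ ∈ L := List.mem_of_mem_erase hv₂
    have hv' := hL v hvL
    rcases hconv.total v δ hv' hδ with hle | hle
    · have hc := hconv.convex v δ hv' hδ (hβeq ▸ hβ) hle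
      rw [hβeq] at hc
      exact ⟨⟨v, hvL, hc.1⟩,
        ⟨v₂, hv₂L, hconv.trans β δ v₂ hβ hδ (hL v₂ hv₂L) hc.2 h2⟩⟩
    · have hβeq' : δ + v = β := by rw [add_comm]; exact hβeq
      have hc := hconv.convex δ v hδ hv' (hβeq' ▸ hβ) hle
      rw [hβeq'] at hc
      exact ⟨⟨v₁, hv₁L, hconv.trans v₁ δ β (hL v₁ hv₁L) hδ hβ h1 hc.1⟩,
        ⟨v, hvL, hc.2⟩⟩

end KLRProof
theorem stmt_9 {I : Type} [Fintype I] [DecidableEq I] (D : CartanDatum I)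
    (le : (I → ℤ) → (I → ℤ) → Prop) (hconv : IsConvexOrder D le)
    (s : ℕ) (hs : 0 < s) (γ : Fin s → (I → ℤ)) (β : I → ℤ)
    (hγ : ∀ t, IsPosRoot D (γ t)) (hβ : IsPosRoot D β)
    (hsum : β = ∑ t, γ t) :
    (∃ t, le (γ t) β) ∧ (∃ t, le β (γ t)) := by
  have hmain := KLRProof.main_lemma D le hconv (List.ofFn γ).length (List.ofFn γ) β rfl
    (by
      intro v hv
      obtain ⟨t, rfl⟩ := List.mem_ofFn.1 hv
      exact hγ t)
    hβ
    (by rw [List.sum_ofFn]; exact hsum)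
  obtain ⟨⟨v, hv, h1⟩, ⟨w, hw, h2⟩⟩ := hmain
  obtain ⟨t, rfl⟩ := List.mem_ofFn.1 hv
  obtain ⟨t', rfl⟩ := List.mem_ofFn.1 hw
  exact ⟨⟨t, h1⟩, ⟨t', h2⟩⟩
end

section
/- Let k be a field, m and N positive integers, and M = ⊕_{d∈ℤ} M_d a ℤ-graded module over the polynomial ring k[x] graded with deg x = m (so x · M_d ⊆ M_{d+m}), such that dim_k M_d ≤ N for all d ∈ ℤ and M_d = 0 for all sufficiently small d. If multiplication by x is injective on M, then M is a free k[x]-module of finite rank. -/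
/-!
STATEMENT 10: Let `k` be a field, `m` and `N` positive integers, and `M = ⊕_{d ∈ ℤ} M_d` a
ℤ-graded module over the polynomial ring `k[x]`, graded so that `deg x = m`
(i.e. `x • M_d ⊆ M_{d+m}`), such that `dim_k M_d ≤ N` for all `d` and `M_d = 0` for all
sufficiently small `d`.  If multiplication by `x` is injective on `M`, then `M` is a free
`k[x]`-module of finite rank. -/
set_option maxHeartbeats 1000000 in
set_option synthInstance.maxHeartbeats 400000 in
theorem stmt_10 (k : Type) [Field k] (m N : ℕ) (hm : 0 < m) (hN : 0 < N)
    (M : Type) [AddCommGroup M] [Module (Polynomial k) M]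
    [Module k M] [IsScalarTower k (Polynomial k) M]
    (ℳ : ℤ → Submodule k M)
    (hinternal : DirectSum.IsInternal ℳ)
    (hgrading : ∀ (d : ℤ), ∀ v ∈ ℳ d, (Polynomial.X : Polynomial k) • v ∈ ℳ (d + m))
    (hdim : ∀ d : ℤ, Module.rank k (ℳ d) ≤ N)
    (hvanish : ∃ D : ℤ, ∀ d < D, ℳ d = ⊥)
    (hinj : Function.Injective (fun v : M => (Polynomial.X : Polynomial k) • v)) :
    Module.Free (Polynomial k) M ∧ Module.Finite (Polynomial k) M := by
  classical
  obtain ⟨D, hD⟩ := hvanish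
  set R := Polynomial k with hR
  -- scalar compatibility
  have hsm : ∀ (a : k) (v : M), (Polynomial.C a : R) • v = a • v := by
    intro a v
    rw [← algebraMap_smul R a v, Polynomial.algebraMap_eq]
  -- X is injective, also powers
  have hX0 : ∀ v : M, (Polynomial.X : R) • v = 0 → v = 0 := by
    intro v h
    have : (fun v : M => (Polynomial.X : R) • v) v =
        (fun v : M => (Polynomial.X : R) • v) 0 := by simpa using h
    exact hinj this
  have hXpow0 : ∀ (n : ℕ) (v : M), ((Polynomial.X : R) ^ n) • v = 0 → v = 0 := by
    intro n
    induction n with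
    | zero => intro v h; simpa using h
    | succ n ih =>
      intro v h
      rw [pow_succ', mul_smul] at h
      exact ih v (hX0 _ h)
  -- powers of X shift the grading
  have hpow_mem : ∀ (j : ℕ) (d : ℤ), ∀ v ∈ ℳ d,
      ((Polynomial.X : R) ^ j) • v ∈ ℳ (d + j * m) := by
    intro j
    induction j with
    | zero => intro d v hv; simpa using hv
    | succ j ih =>
      intro d v hv
      have h1 : ((Polynomial.X : R) ^ (j + 1)) • v
          = (Polynomial.X : R) • ((Polynomial.X : R) ^ j) • v := by
        rw [pow_succ', mul_smul]
      have h2 := hgrading (d + j * m) _ (ih d v hv)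
      rw [h1]
      have : d + (j + 1 : ℕ) * m = d + (j : ℤ) * m + m := by push_cast; ring
      rw [this]
      exact h2
  -- the decomposition equivalence
  set e := LinearEquiv.ofBijective (DirectSum.coeLinearMap ℳ) hinternal with he
  -- torsion-freeness
  have tor : NoZeroSMulDivisors R M := by
    refine ⟨fun {p v} hpv => ?_⟩
    by_contra hc
    push_neg at hc
    obtain ⟨hp, hv⟩ := hc
    set w := e.symm v with hw
    have hwne : w ≠ 0 := by
      intro h0
      apply hv
      have h1 := congrArg e h0
      rw [hw, e.apply_symm_apply] at h1
      rw [h1]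
      exact e.toLinearMap.map_zero
    have hs : (DFinsupp.support w).Nonempty := by
      rw [Finset.nonempty_iff_ne_empty]
      intro h
      exact hwne (DFinsupp.support_eq_empty.mp h)
    set s := DFinsupp.support w with hsdef
    set d₀ := s.max' hs with hd₀def
    have hd₀ : w d₀ ≠ 0 := DFinsupp.mem_support_iff.mp (s.max'_mem hs)
    set n := p.natDegree with hn
    set T := d₀ + (n : ℤ) * m with hT
    -- v as a sum of its components
    have hv_sum : v = ∑ d ∈ s, ((w d : M)) := by
      conv_lhs => rw [← e.apply_symm_apply v, ← hw, ← DirectSum.sum_support_of w]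
      rw [map_sum]
      apply Finset.sum_congr rfl
      intro d _
      show DirectSum.coeLinearMap ℳ (DirectSum.of _ d (w d)) = _
      rw [DirectSum.coeLinearMap_of]
    -- expand p • v
    have hexp : (0 : M) = ∑ d ∈ s, ∑ j ∈ Finset.range (n + 1),
        p.coeff j • (((Polynomial.X : R) ^ j) • (w d : M)) := by
      rw [← hpv, hv_sum, Finset.smul_sum]
      apply Finset.sum_congr rfl
      intro d _
      conv_lhs => rw [Polynomial.as_sum_range p]
      rw [Finset.sum_smul]
      apply Finset.sum_congr rfl
      intro j _
      rw [← Polynomial.C_mul_X_pow_eq_monomial, mul_smul, hsm]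
    -- the projection onto degree T
    set π : M →ₗ[k] M :=
      (ℳ T).subtype ∘ₗ (DirectSum.component k ℤ (fun d => ℳ d) T) ∘ₗ e.symm.toLinearMap
      with hπ
    have hπ_apply : ∀ (c : ℤ) (u : M), u ∈ ℳ c → π u = if c = T then u else 0 := by
      intro c u hu
      by_cases h : c = T
      · have hu' : u ∈ ℳ T := h ▸ hu
        show ((e.symm u) T : M) = _
        rw [hinternal.ofBijective_coeLinearMap_of_mem hu', if_pos h]
      · show ((e.symm u) T : M) = _
        rw [hinternal.ofBijective_coeLinearMap_of_mem_ne h hu, if_neg h]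
        rfl
    -- apply π to the expansion
    have h0 : (0 : M) = ∑ d ∈ s, ∑ j ∈ Finset.range (n + 1),
        (if d + (j : ℤ) * m = T then p.coeff j • (((Polynomial.X : R) ^ j) • (w d : M))
          else 0) := by
      have h1 : π (∑ d ∈ s, ∑ j ∈ Finset.range (n + 1),
          p.coeff j • (((Polynomial.X : R) ^ j) • (w d : M)))
          = ∑ d ∈ s, ∑ j ∈ Finset.range (n + 1),
          (if d + (j : ℤ) * m = T then p.coeff j • (((Polynomial.X : R) ^ j) • (w d : M))
            else 0) := by
        rw [map_sum]
        refine Finset.sum_congr rfl fun d _ => ?_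
        rw [map_sum]
        refine Finset.sum_congr rfl fun j _ => ?_
        rw [map_smul, hπ_apply _ _ (hpow_mem j d _ (w d).2)]
        by_cases h : d + (j : ℤ) * m = T
        · rw [if_pos h, if_pos h]
        · rw [if_neg h, if_neg h, smul_zero]
      rw [← h1, ← hexp, map_zero]
    -- only the top term survives
    have key : ∀ d ∈ s, ∀ j ∈ Finset.range (n + 1),
        d + (j : ℤ) * m = T → d = d₀ ∧ j = n := by
      intro d hd j hj heq
      have hdle : d ≤ d₀ := Finset.le_max' s d hd
      have hjle : (j : ℤ) ≤ (n : ℤ) := by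
        exact_mod_cast Nat.lt_succ_iff.mp (Finset.mem_range.mp hj)
      have hmpos : (0 : ℤ) < m := by exact_mod_cast hm
      have hAB : (j : ℤ) * m ≤ (n : ℤ) * m :=
        mul_le_mul_of_nonneg_right hjle (le_of_lt hmpos)
      rw [hT] at heq
      have hdd : d = d₀ := by omega
      have hj' : (j : ℤ) * m = (n : ℤ) * m := by omega
      have : (j : ℤ) = n := mul_right_cancel₀ (ne_of_gt hmpos) hj'
      exact ⟨hdd, by exact_mod_cast this⟩
    have htop : (0 : M) = p.coeff n • (((Polynomial.X : R) ^ n) • (w d₀ : M)) := by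
      rw [h0]
      rw [Finset.sum_eq_single_of_mem d₀ (s.max'_mem hs)]
      · rw [Finset.sum_eq_single_of_mem n (Finset.self_mem_range_succ n)]
        · rw [if_pos]; rw [hT]
        · intro j hj hjn
          rw [if_neg]
          intro habs
          exact hjn (key d₀ (s.max'_mem hs) j hj habs).2
      · intro d hd hdd
        apply Finset.sum_eq_zero
        intro j hj
        rw [if_neg]
        intro habs
        exact hdd (key d hd j hj habs).1
    -- conclude
    have hcn : p.coeff n ≠ 0 := by
      rw [hn]; exact Polynomial.leadingCoeff_ne_zero.mpr hp
    have hXn : ((Polynomial.X : R) ^ n) • (w d₀ : M) = 0 := by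
      have := htop.symm
      have h2 := congrArg (fun u => (p.coeff n)⁻¹ • u) this
      simpa [smul_smul, inv_mul_cancel₀ hcn] using h2
    have : (w d₀ : M) = 0 := hXpow0 n _ hXn
    exact hd₀ (by exact_mod_cast Subtype.ext this)
  -- finite dimensionality of the pieces
  have hfd : ∀ d : ℤ, FiniteDimensional k (ℳ d) := by
    intro d
    exact Module.rank_lt_aleph0_iff.mp (lt_of_le_of_lt (hdim d) (Cardinal.nat_lt_aleph0 N))
  set g : ℤ → ℕ := fun d => Module.finrank k (ℳ d) with hg
  have hgN : ∀ d, g d ≤ N := fun d => Module.finrank_le_of_rank_le (hdim d)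
  -- the multiplication-by-X maps
  set L : M →ₗ[k] M :=
    { toFun := fun v => (Polynomial.X : R) • v
      map_add' := fun a b => smul_add _ a b
      map_smul' := by
        intro a v
        simp only [RingHom.id_apply]
        rw [← hsm, ← hsm, smul_smul, smul_smul, mul_comm] } with hL
  set φ : ∀ d : ℤ, ℳ d →ₗ[k] ℳ (d + m) := fun d =>
    (L.comp (ℳ d).subtype).codRestrict (ℳ (d + m)) (fun v => hgrading d v v.2) with hφ
  have hφ_apply : ∀ (d : ℤ) (v : ℳ d), (φ d v : M) = (Polynomial.X : R) • (v : M) := by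
    intro d v; rfl
  have hφinj : ∀ d : ℤ, Function.Injective (φ d) := by
    intro d a b hab
    have h1 : (φ d a : M) = (φ d b : M) := by rw [hab]
    rw [hφ_apply, hφ_apply] at h1
    have : (a : M) = b := hinj h1
    exact Subtype.ext this
  have gmono : ∀ d : ℤ, g d ≤ g (d + m) := by
    intro d
    haveI := hfd d; haveI := hfd (d + m)
    exact LinearMap.finrank_le_finrank_of_injective (hφinj d)
  -- sliding window sums
  set S : ℤ → ℕ := fun d => ∑ i ∈ Finset.range m, g (d + i) with hS
  have Skey : ∀ d : ℤ, S d + g (d + m) = S (d + 1) + g d := by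
    intro d
    have h1 : S d + g (d + m) = ∑ i ∈ Finset.range (m + 1), g (d + i) :=
      (Finset.sum_range_succ (fun i => g (d + i)) m).symm
    have h2 : ∑ i ∈ Finset.range (m + 1), g (d + i)
        = ∑ i ∈ Finset.range m, g (d + ((i : ℕ) + 1 : ℕ)) + g (d + (0 : ℕ)) :=
      Finset.sum_range_succ' (fun i => g (d + i)) m
    rw [h1, h2]
    congr 1
    · apply Finset.sum_congr rfl
      intro i _
      congr 1
      push_cast
      ring
    · congr 1
      push_cast
      ring
  have Smono1 : ∀ d : ℤ, S d ≤ S (d + 1) := by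
    intro d
    have h1 := Skey d
    have h2 := gmono d
    omega
  have Smono : ∀ d d' : ℤ, d ≤ d' → S d ≤ S d' := by
    intro d d' hdd'
    refine Int.le_induction (motive := fun c _ => S d ≤ S c) (le_refl (S d)) ?_ d' hdd'
    intro c _ hSc
    exact le_trans hSc (Smono1 c)
  have Sbdd : ∀ d : ℤ, S d ≤ m * N := by
    intro d
    calc S d ≤ ∑ _i ∈ Finset.range m, N := Finset.sum_le_sum (fun i _ => hgN _)
    _ = m * N := by rw [Finset.sum_const, Finset.card_range, smul_eq_mul]
  -- the supremum of S is attained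
  have hbdd : BddAbove (Set.range S) := ⟨m * N, by rintro _ ⟨d, rfl⟩; exact Sbdd d⟩
  have hne : (Set.range S).Nonempty := ⟨S 0, ⟨0, rfl⟩⟩
  obtain ⟨D₁, hD₁⟩ : ∃ d : ℤ, S d = sSup (Set.range S) := Nat.sSup_mem hne hbdd
  have hmax : ∀ d : ℤ, S d ≤ S D₁ := by
    intro d
    rw [hD₁]
    exact le_csSup hbdd ⟨d, rfl⟩
  have gstab : ∀ d : ℤ, D₁ ≤ d → g (d + m) = g d := by
    intro d hd
    have h1 : S d = S D₁ := le_antisymm (hmax d) (Smono D₁ d hd)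
    have h2 : S (d + 1) = S D₁ := le_antisymm (hmax _) (Smono D₁ (d + 1) (by omega))
    have h3 := Skey d
    omega
  have hsurj : ∀ d : ℤ, D₁ ≤ d → Function.Surjective (φ d) := by
    intro d hd
    haveI := hfd d; haveI := hfd (d + m)
    have hrt : LinearMap.range (φ d) = ⊤ := by
      apply Submodule.eq_top_of_finrank_eq
      rw [LinearMap.finrank_range_of_inj (hφinj d)]
      exact (gstab d hd).symm
    exact LinearMap.range_eq_top.mp hrt
  have hit : ∀ d : ℤ, D₁ + m ≤ d → ∀ u ∈ ℳ d,
      ∃ v ∈ ℳ (d - m), (Polynomial.X : R) • v = u := by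
    intro d hd u hu
    have hd' : D₁ ≤ d - m := by omega
    have hu' : u ∈ ℳ (d - m + m) := by rwa [sub_add_cancel]
    obtain ⟨v, hv⟩ := hsurj (d - m) hd' ⟨u, hu'⟩
    refine ⟨v, v.2, ?_⟩
    have := congrArg (Subtype.val) hv
    rw [hφ_apply] at this
    exact this
  -- the generating subspace
  set W : Submodule k M := (Finset.Icc D (D₁ + m)).sup ℳ with hW
  haveI hfd' : ∀ d : ℤ, FiniteDimensional k (ℳ d) := hfd
  haveI hWfd : FiniteDimensional k W := by
    apply Submodule.finiteDimensional_finset_sup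
  set P : Submodule R M := Submodule.span R (W : Set M) with hP
  have hMlow : ∀ d : ℤ, d ≤ D₁ + m → ∀ u ∈ ℳ d, u ∈ P := by
    intro d hd u hu
    by_cases hcase : d < D
    · rw [hD d hcase] at hu
      simp only [Submodule.mem_bot] at hu
      rw [hu]; exact P.zero_mem
    · push_neg at hcase
      have h1 : ℳ d ≤ W := Finset.le_sup (Finset.mem_Icc.mpr ⟨hcase, hd⟩)
      exact Submodule.subset_span (h1 hu)
  have hMall : ∀ (n : ℕ) (d : ℤ), d ≤ D₁ + m + n → ∀ u ∈ ℳ d, u ∈ P := by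
    intro n
    induction n with
    | zero => intro d hd u hu; exact hMlow d (by omega) u hu
    | succ n ih =>
      intro d hd u hu
      by_cases hcase : d ≤ D₁ + m + n
      · exact ih d hcase u hu
      · push_neg at hcase
        obtain ⟨v, hv, hxv⟩ := hit d (by omega) u hu
        have hvP : v ∈ P := ih (d - m) (by omega) v hv
        rw [← hxv]
        exact P.smul_mem _ hvP
  have hPtop : P = ⊤ := by
    rw [eq_top_iff]
    intro u _
    have h1 : u ∈ iSup ℳ := by
      rw [hinternal.submodule_iSup_eq_top]; trivial
    have h2 : iSup ℳ ≤ P.restrictScalars k := by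
      apply iSup_le
      intro d
      intro x hx
      by_cases hcase : d ≤ D₁ + m
      · exact hMlow d hcase x hx
      · push_neg at hcase
        have : d ≤ D₁ + m + (d - D₁ - m).toNat := by omega
        exact hMall _ d this x hx
    exact h2 h1
  -- finiteness
  have hWfg : (W : Submodule k M).FG := (Submodule.fg_iff_finiteDimensional W).mpr hWfd
  obtain ⟨t, ht⟩ := hWfg
  have hspan : Submodule.span R (t : Set M) = ⊤ := by
    rw [← hPtop, hP]
    apply le_antisymm
    · apply Submodule.span_mono
      rw [← ht]
      exact Submodule.subset_span
    · rw [Submodule.span_le]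
      intro u hu
      have h1 : u ∈ Submodule.span k (t : Set M) := by rw [ht]; exact hu
      exact Submodule.span_subset_span k R _ h1
  haveI hfin : Module.Finite R M := ⟨⟨t, hspan⟩⟩
  haveI := tor
  exact ⟨Module.free_of_finite_type_torsion_free', hfin⟩
end

section
/- Let k be a field, N a positive integer, and V = ⊕_{d∈ℤ} V_d a ℤ-graded k-vector space with dim_k V_d ≤ N for all d ∈ ℤ and V_d = 0 for all sufficiently small d. Let x, y : V → V be commuting k-linear maps that are homogeneous of positive degrees m_1 and m_2 respectively (x(V_d) ⊆ V_{d+m_1} and y(V_d) ⊆ V_{d+m_2} for all d, with m_1, m_2 > 0). Then for every v ∈ V there exists a nonzero polynomial f ∈ k[X,Y] in two commuting variables such that f(x,y)(v) = 0. -/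
/-!
STATEMENT 11: Let `k` be a field, `N` a positive integer, and `V = ⊕_{d ∈ ℤ} V_d` a ℤ-graded
`k`-vector space with `dim_k V_d ≤ N` for all `d` and `V_d = 0` for small `d`.  Let
`x y : V → V` be commuting `k`-linear maps, homogeneous of positive degrees `m₁`, `m₂`.
Then every `v ∈ V` is annihilated by a nonzero two-variable polynomial `f` evaluated at
`(x, y)`; here `f(x,y) = Σ_{monomials μ} coeff(μ) • x^{μ(0)} * y^{μ(1)}` in `End_k V`. -/
theorem stmt_11 (k : Type) [Field k] (N : ℕ) (hN : 0 < N)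
    (V : Type) [AddCommGroup V] [Module k V]
    (𝒱 : ℤ → Submodule k V)
    (hinternal : DirectSum.IsInternal 𝒱)
    (hdim : ∀ d : ℤ, Module.rank k (𝒱 d) ≤ N)
    (hvanish : ∃ D : ℤ, ∀ d < D, 𝒱 d = ⊥)
    (x y : Module.End k V) (hcomm : x * y = y * x)
    (m₁ m₂ : ℤ) (hm₁ : 0 < m₁) (hm₂ : 0 < m₂)
    (hx : ∀ (d : ℤ), ∀ v ∈ 𝒱 d, x v ∈ 𝒱 (d + m₁))
    (hy : ∀ (d : ℤ), ∀ v ∈ 𝒱 d, y v ∈ 𝒱 (d + m₂))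
    (v : V) :
    ∃ f : MvPolynomial (Fin 2) k, f ≠ 0 ∧
      (f.support.sum fun μ => MvPolynomial.coeff μ f • (x ^ (μ 0) * y ^ (μ 1))) v = 0 := by
  classical
  by_contra hcon
  push_neg at hcon
  obtain ⟨D, hD⟩ := hvanish
  -- the family (x^a * y^b) v is linearly independent
  have li : LinearIndependent k (fun p : ℕ × ℕ => (x ^ p.1 * y ^ p.2) v) := by
    rw [linearIndependent_iff]
    intro g hg
    by_contra hgne
    set e : ℕ × ℕ → (Fin 2 →₀ ℕ) := fun p => Finsupp.single 0 p.1 + Finsupp.single 1 p.2 with he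
    have he0 : ∀ p : ℕ × ℕ, (e p) 0 = p.1 := by
      intro p
      simp [he, Finsupp.single_eq_of_ne (show (1 : Fin 2) ≠ 0 by decide)]
    have he1 : ∀ p : ℕ × ℕ, (e p) 1 = p.2 := by
      intro p
      simp [he, Finsupp.single_eq_of_ne (show (0 : Fin 2) ≠ 1 by decide)]
    have einj : Function.Injective e := by
      intro p q hpq
      have h0 := congrArg (fun μ : Fin 2 →₀ ℕ => μ 0) hpq
      have h1 := congrArg (fun μ : Fin 2 →₀ ℕ => μ 1) hpq
      simp only [he0, he1] at h0 h1
      exact Prod.ext h0 h1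
    set f : MvPolynomial (Fin 2) k :=
      g.support.sum (fun p => MvPolynomial.monomial (e p) (g p)) with hf
    have hcoeff : ∀ p₀ ∈ g.support, MvPolynomial.coeff (e p₀) f = g p₀ := by
      intro p₀ hp₀
      rw [hf, MvPolynomial.coeff_sum]
      have : ∀ p ∈ g.support,
          MvPolynomial.coeff (e p₀) (MvPolynomial.monomial (e p) (g p)) =
            if p = p₀ then g p else 0 := by
        intro p _
        rw [MvPolynomial.coeff_monomial]
        simp [einj.eq_iff]
      rw [Finset.sum_congr rfl this, Finset.sum_ite_eq' g.support p₀ (fun p => g p)]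
      simp [hp₀]
    have hfne : f ≠ 0 := by
      obtain ⟨p₀, hp₀⟩ := Finsupp.support_nonempty_iff.mpr hgne
      intro h0
      have := hcoeff p₀ hp₀
      rw [h0] at this
      simp at this
      exact Finsupp.mem_support_iff.mp hp₀ this.symm
    have hsupp : f.support ⊆ g.support.image e := by
      rw [hf]
      refine MvPolynomial.support_sum.trans ?_
      intro μ hμ
      rw [Finset.mem_biUnion] at hμ
      obtain ⟨p, hp, hμ⟩ := hμ
      have := MvPolynomial.support_monomial_subset hμ
      rw [Finset.mem_singleton] at this
      exact Finset.mem_image.mpr ⟨p, hp, this.symm⟩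
    refine hcon f hfne ?_
    have hsum : (f.support.sum fun μ => MvPolynomial.coeff μ f • (x ^ (μ 0) * y ^ (μ 1)))
        = (g.support.image e).sum fun μ => MvPolynomial.coeff μ f • (x ^ (μ 0) * y ^ (μ 1)) := by
      refine Finset.sum_subset hsupp ?_
      intro μ _ hμ
      rw [MvPolynomial.notMem_support_iff.mp hμ, zero_smul]
    rw [hsum, Finset.sum_image (fun p _ q _ h => einj h)]
    have : ∀ p ∈ g.support,
        MvPolynomial.coeff (e p) f • (x ^ ((e p) 0) * y ^ ((e p) 1)) =
          g p • (x ^ p.1 * y ^ p.2) := by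
      intro p hp
      rw [hcoeff p hp, he0, he1]
    rw [Finset.sum_congr rfl this]
    rw [Finsupp.linearCombination_apply, Finsupp.sum] at hg
    rw [LinearMap.coe_sum, Finset.sum_apply]
    simpa [LinearMap.smul_apply] using hg
  -- choose E with v ∈ W 0
  have htop : v ∈ ⨆ d, 𝒱 d := by
    rw [hinternal.submodule_iSup_eq_top]; trivial
  rw [Submodule.mem_iSup_iff_exists_finset] at htop
  obtain ⟨s₀, hs₀⟩ := htop
  set E : ℤ := (insert D s₀).max' (Finset.insert_nonempty _ _) with hE
  have hDE : D ≤ E := Finset.le_max' _ _ (Finset.mem_insert_self _ _)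
  set M : ℤ := m₁ + m₂ with hM
  have hMpos : 0 < M := by omega
  set W : ℕ → Submodule k V := fun c => ⨆ d ∈ Finset.Icc D (E + (c : ℤ) * M), 𝒱 d with hW
  have hWmono : ∀ {c c' : ℕ}, c ≤ c' → W c ≤ W c' := by
    intro c c' hcc
    refine biSup_mono fun d hd => ?_
    rw [Finset.mem_Icc] at hd ⊢
    have : (c : ℤ) * M ≤ (c' : ℤ) * M :=
      mul_le_mul_of_nonneg_right (by exact_mod_cast hcc) hMpos.le
    omega
  have hmemW : ∀ d : ℤ, D ≤ d → d ≤ E + (0 : ℤ) → ∀ c : ℕ, True := fun _ _ _ _ => trivial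
  have h𝒱W : ∀ (c : ℕ) (d : ℤ), D ≤ d → d ≤ E + (c : ℤ) * M → 𝒱 d ≤ W c := by
    intro c d h1 h2
    exact le_biSup _ (Finset.mem_Icc.mpr ⟨h1, h2⟩)
  have hxW : ∀ (c : ℕ), ∀ w ∈ W c, x w ∈ W (c + 1) := by
    intro c w hw
    have : W c ≤ Submodule.comap x (W (c + 1)) := by
      refine iSup₂_le fun d hd => ?_
      rw [Finset.mem_Icc] at hd
      intro u hu
      refine h𝒱W (c + 1) (d + m₁) (by omega) ?_ (hx d u hu)
      push_cast
      nlinarith [hd.1, hd.2]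
    exact this hw
  have hyW : ∀ (c : ℕ), ∀ w ∈ W c, y w ∈ W (c + 1) := by
    intro c w hw
    have : W c ≤ Submodule.comap y (W (c + 1)) := by
      refine iSup₂_le fun d hd => ?_
      rw [Finset.mem_Icc] at hd
      intro u hu
      refine h𝒱W (c + 1) (d + m₂) (by omega) ?_ (hy d u hu)
      push_cast
      nlinarith [hd.1, hd.2]
    exact this hw
  have hv0 : v ∈ W 0 := by
    refine (iSup₂_le fun d hd => ?_ : (⨆ d ∈ s₀, 𝒱 d) ≤ W 0) hs₀
    by_cases hdD : d < D
    · rw [hD d hdD]; exact bot_le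
    · refine h𝒱W 0 d (by omega) ?_
      push_cast
      have : d ≤ E := Finset.le_max' _ _ (Finset.mem_insert_of_mem hd)
      omega
  have hxyW : ∀ a b : ℕ, (x ^ a * y ^ b) v ∈ W (a + b) := by
    have hyb : ∀ b : ℕ, (y ^ b) v ∈ W b := by
      intro b
      induction b with
      | zero => simpa using hv0
      | succ b ih =>
          have := hyW b _ ih
          rwa [pow_succ', Module.End.mul_apply] at *
    intro a b
    induction a with
    | zero => simpa using hyb b
    | succ a ih =>
        have := hxW (a + b) _ ih
        have heq : (x ^ (a + 1) * y ^ b) v = x ((x ^ a * y ^ b) v) := by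
          rw [pow_succ', mul_assoc, Module.End.mul_apply]
        rw [heq]
        convert this using 2
        omega
  -- rank bound
  have hrank : ∀ s : Finset ℤ, Module.rank k ↥(⨆ d ∈ s, 𝒱 d) ≤ (s.card : Cardinal) * N := by
    intro s
    induction s using Finset.induction_on with
    | empty => simp
    | @insert a s ha ih =>
        rw [Finset.iSup_insert]
        refine (Submodule.rank_add_le_rank_add_rank _ _).trans ?_
        rw [Finset.card_insert_of_notMem ha]
        push_cast
        calc Module.rank k ↥(𝒱 a) + Module.rank k ↥(⨆ d ∈ s, 𝒱 d)
            ≤ (N : Cardinal) + (s.card : Cardinal) * N := add_le_add (hdim a) ih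
          _ = ((s.card : Cardinal) + 1) * N := by ring
  -- counting contradiction
  set A : ℕ := (E + 1 - D).toNat with hA
  set B : ℕ := M.toNat with hB
  have key : ∀ n : ℕ, (n + 1) * (n + 1) ≤ (A + 2 * n * B) * N := by
    intro n
    set sn := Finset.range (n + 1) ×ˢ Finset.range (n + 1) with hsn
    have hmem : ∀ p ∈ sn, (x ^ p.1 * y ^ p.2) v ∈ W (2 * n) := by
      intro p hp
      rw [hsn, Finset.mem_product, Finset.mem_range, Finset.mem_range] at hp
      exact hWmono (by omega) (hxyW p.1 p.2)
    have li2 : LinearIndependent k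
        (fun p : ↥sn => (⟨(x ^ (p : ℕ × ℕ).1 * y ^ (p : ℕ × ℕ).2) v,
          hmem p p.2⟩ : ↥(W (2 * n)))) := by
      apply LinearIndependent.of_comp (W (2 * n)).subtype
      exact li.comp Subtype.val Subtype.val_injective
    have hcard := li2.cardinal_le_rank
    rw [Cardinal.mk_coe_finset] at hcard
    have hrank2 : Module.rank k ↥(W (2 * n)) ≤
        (((Finset.Icc D (E + (2 * n : ℕ) * M)).card : ℕ) : Cardinal) * N := hrank _
    have hcard2 : ((sn.card : ℕ) : Cardinal) ≤
        (((Finset.Icc D (E + (2 * n : ℕ) * M)).card * N : ℕ) : Cardinal) := by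
      push_cast
      exact hcard.trans hrank2
    rw [Nat.cast_le] at hcard2
    have hsncard : sn.card = (n + 1) * (n + 1) := by
      rw [hsn, Finset.card_product, Finset.card_range]
    rw [hsncard] at hcard2
    refine hcard2.trans (Nat.mul_le_mul_right N ?_)
    rw [Int.card_Icc]
    have hMeq : ((2 * n : ℕ) : ℤ) * M = ((2 * n * B : ℕ) : ℤ) := by
      have hBM : (B : ℤ) = M := by rw [hB]; exact Int.toNat_of_nonneg hMpos.le
      push_cast
      rw [hBM]
    have : E + ((2 * n : ℕ) : ℤ) * M + 1 - D = (E + 1 - D) + ((2 * n * B : ℕ) : ℤ) := by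
      rw [hMeq]; ring
    rw [this]
    have hgen : ∀ t : ℕ, ((E + 1 - D) + (t : ℤ)).toNat ≤ A + t := by
      intro t; rw [hA]; omega
    exact hgen _
  have hbig := key ((A + 2 * B) * N)
  set n := (A + 2 * B) * N with hn
  have h1 : A * N + 2 * B * N = n := by rw [hn]; ring
  have e1 : A * N ≤ n := by omega
  have e2 : 2 * B * N ≤ n := by omega
  have e3 : n * (2 * B * N) ≤ n * n := Nat.mul_le_mul_left n e2
  have hre : (A + 2 * n * B) * N = A * N + n * (2 * B * N) := by ring
  rw [hre] at hbig
  have contra : (n + 1) * (n + 1) ≤ n + n * n := hbig.trans (add_le_add e1 e3)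
  have hsq : (n + 1) * (n + 1) = n * n + 2 * n + 1 := by ring
  linarith
end
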